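/- arXiv:1102.0681 — 5 statements merged into one kernel-verified Lean document; each statement's English description precedes it below -/
import Mathlib

section
/- Let 0 < p₁ ≤ p₂ ≤ 2 or 2 ≤ p₁ ≤ p₂ ≤ ∞. Then there exist constants C ≥ c > 0 (depending only on p₁, p₂) such that for all N ∈ ℕ and all k ∈ ℕ with k ≤ N/4, one has c ≤ a_k(id : ℓ_{p₁}^N → ℓ_{p₂}^N) ≤ C. -/
open scoped ENNReal

/-- The `ℓ_p` (quasi-)norm on `ℝ^N`: `(∑ i |x i|^p)^{1/p}` for `p < ∞`,
and `max_i |x i|` for `p = ∞`. -/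
noncomputable def lpnorm (p : ℝ≥0∞) {N : ℕ} (x : Fin N → ℝ) : ℝ :=
  if p = ∞ then ⨆ i, |x i| else (∑ i, |x i| ^ p.toReal) ^ (1 / p.toReal)

/-- The `k`-th approximation number of the identity map `id : ℓ_{p₁}^N → ℓ_{p₂}^N`:
`inf { sup_{‖x‖_{p₁} ≤ 1} ‖x - A x‖_{p₂} : A linear, rank A < k }`. -/
noncomputable def approxNumId (p₁ p₂ : ℝ≥0∞) (N k : ℕ) : ℝ :=
  sInf {r : ℝ | ∃ A : (Fin N → ℝ) →ₗ[ℝ] (Fin N → ℝ),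
    Module.rank ℝ (LinearMap.range A) < k ∧
    r = sSup {c : ℝ | ∃ x : Fin N → ℝ, lpnorm p₁ x ≤ 1 ∧ c = lpnorm p₂ (x - A x)}}

section auxlemmas
variable {N : ℕ} {p q : ℝ≥0∞} {x y : Fin N → ℝ}

lemma lpnorm_nonneg (p : ℝ≥0∞) (x : Fin N → ℝ) : 0 ≤ lpnorm p x := by
  unfold lpnorm
  split_ifs with h
  · rcases isEmpty_or_nonempty (Fin N) with hN | hN
    · simp
    · exact le_ciSup_of_le (Set.Finite.bddAbove (Set.finite_range _)) hN.some (abs_nonneg _)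
  · positivity

lemma abs_le_lpnorm (hp : p ≠ 0) (x : Fin N → ℝ) (i : Fin N) : |x i| ≤ lpnorm p x := by
  unfold lpnorm
  split_ifs with h
  · exact le_ciSup (f := fun i => |x i|) (Set.Finite.bddAbove (Set.finite_range _)) i
  · have hpt : 0 < p.toReal := ENNReal.toReal_pos hp h
    have h1 : |x i| = (|x i| ^ p.toReal) ^ (1 / p.toReal) := by
      rw [← Real.rpow_mul (abs_nonneg _), mul_one_div_cancel hpt.ne', Real.rpow_one]
    rw [h1]
    apply Real.rpow_le_rpow (by positivity) _ (by positivity)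
    exact Finset.single_le_sum (f := fun j => |x j| ^ p.toReal) (fun j _ => by positivity)
      (Finset.mem_univ i)

lemma lpnorm_mono_entries (h : ∀ i, |x i| ≤ |y i|) : lpnorm p x ≤ lpnorm p y := by
  unfold lpnorm
  split_ifs with hp
  · rcases isEmpty_or_nonempty (Fin N) with hN | hN
    · simp
    · exact ciSup_mono (Set.Finite.bddAbove (Set.finite_range _)) h
  · apply Real.rpow_le_rpow (by positivity) _ (by positivity)
    exact Finset.sum_le_sum fun i _ =>
      Real.rpow_le_rpow (abs_nonneg _) (h i) ENNReal.toReal_nonneg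

lemma lpnorm_mono_p (hp : p ≠ 0) (hpq : p ≤ q) (x : Fin N → ℝ) :
    lpnorm q x ≤ lpnorm p x := by
  rcases eq_or_ne q ∞ with hq | hq
  · subst hq
    rcases eq_or_ne p ∞ with hp' | hp'
    · subst hp'; rfl
    · unfold lpnorm
      rw [if_pos rfl, if_neg hp']
      rcases isEmpty_or_nonempty (Fin N) with hN | hN
      · simp; positivity
      · exact ciSup_le fun i => by
          simpa [lpnorm, if_neg hp', one_div] using abs_le_lpnorm hp x i
  · have hp' : p ≠ ∞ := fun hh => hq (top_le_iff.mp (hh ▸ hpq))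
    have hpt : 0 < p.toReal := ENNReal.toReal_pos hp hp'
    have hqt : 0 < q.toReal := ENNReal.toReal_pos (fun hh => hp (le_zero_iff.mp (hh ▸ hpq))) hq
    have hle : p.toReal ≤ q.toReal := ENNReal.toReal_le_toReal hp' hq |>.mpr hpq
    unfold lpnorm
    rw [if_neg hq, if_neg hp']
    set s : ℝ := (∑ i, |x i| ^ p.toReal) ^ (1 / p.toReal) with hs
    have hs0 : 0 ≤ s := by positivity
    have key : ∑ i, |x i| ^ q.toReal ≤ s ^ q.toReal := by
      have hxi : ∀ i, |x i| ≤ s := fun i => by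
        rw [hs, one_div]
        simpa [lpnorm, if_neg hp', one_div] using abs_le_lpnorm hp x i
      rcases eq_or_lt_of_le hs0 with hs0' | hs0'
      · have hx0 : ∀ i, x i = 0 := fun i =>
          abs_eq_zero.mp (le_antisymm (le_trans (hxi i) hs0'.symm.le) (abs_nonneg _))
        simp only [hx0, abs_zero, Real.zero_rpow hqt.ne', Finset.sum_const_zero]
        positivity
      · have hspt : s ^ p.toReal = ∑ i, |x i| ^ p.toReal := by
          rw [hs, ← Real.rpow_mul (by positivity), one_div_mul_cancel hpt.ne', Real.rpow_one]
        have hS0 : 0 < ∑ i, |x i| ^ p.toReal := by rw [← hspt]; positivity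
        have hterm : ∀ i, |x i| ^ q.toReal / s ^ q.toReal ≤ |x i| ^ p.toReal / s ^ p.toReal := by
          intro i
          rw [← Real.div_rpow (abs_nonneg _) hs0, ← Real.div_rpow (abs_nonneg _) hs0]
          rcases eq_or_lt_of_le (abs_nonneg (x i)) with h0 | h0
          · rw [← h0]
            simp [Real.zero_rpow hqt.ne', Real.zero_rpow hpt.ne']
          · exact Real.rpow_le_rpow_of_exponent_ge (by positivity)
              ((div_le_one hs0').mpr (hxi i)) hle
        have hdiv : (∑ i, |x i| ^ q.toReal) / s ^ q.toReal
            ≤ (∑ i, |x i| ^ p.toReal) / s ^ p.toReal := by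
          rw [Finset.sum_div, Finset.sum_div]
          exact Finset.sum_le_sum fun i _ => hterm i
        rw [hspt, div_self hS0.ne'] at hdiv
        have hsq : (0:ℝ) < s ^ q.toReal := by positivity
        calc ∑ i, |x i| ^ q.toReal
            = (∑ i, |x i| ^ q.toReal) / s ^ q.toReal * s ^ q.toReal := by field_simp
          _ ≤ 1 * s ^ q.toReal := mul_le_mul_of_nonneg_right hdiv hsq.le
          _ = s ^ q.toReal := one_mul _
    calc (∑ i, |x i| ^ q.toReal) ^ (1 / q.toReal) ≤ (s ^ q.toReal) ^ (1/q.toReal) :=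
          Real.rpow_le_rpow (by positivity) key (by positivity)
      _ = s := by rw [← Real.rpow_mul hs0, mul_one_div_cancel hqt.ne', Real.rpow_one]

lemma lpnorm_single (hp : p ≠ 0) (hp' : p ≠ ∞) (j : Fin N) :
    lpnorm p (Pi.single j (1:ℝ)) = 1 := by
  have hpt : 0 < p.toReal := ENNReal.toReal_pos hp hp'
  unfold lpnorm
  rw [if_neg hp']
  have : ∑ i, |(Pi.single j 1 : Fin N → ℝ) i| ^ p.toReal = 1 := by
    rw [Finset.sum_eq_single j]
    · simp
    · intro i _ hij
      rw [Pi.single_eq_of_ne hij, abs_zero, Real.zero_rpow hpt.ne']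
    · simp
  rw [this, Real.one_rpow]

lemma lpnorm_zero_eq (hp : p ≠ 0) : lpnorm p (0 : Fin N → ℝ) = 0 := by
  unfold lpnorm
  split_ifs with h
  · simp
  · have hpt : 0 < p.toReal := ENNReal.toReal_pos hp h
    simp [Real.zero_rpow hpt.ne', one_div, Real.zero_rpow (inv_ne_zero hpt.ne')]

lemma lpnorm_two_eq (x : Fin N → ℝ) : lpnorm 2 x = Real.sqrt (∑ i, x i ^ 2) := by
  unfold lpnorm
  rw [if_neg (by norm_num)]
  have h2 : (2 : ℝ≥0∞).toReal = 2 := by norm_num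
  rw [h2, Real.sqrt_eq_rpow]
  congr 1
  refine Finset.sum_congr rfl fun i _ => ?_
  rw [show ((2:ℝ) = ((2:ℕ):ℝ)) by norm_num, Real.rpow_natCast, sq_abs]

lemma lpnorm_smul_nonneg (hp : p ≠ 0) (hp' : p ≠ ∞) {c : ℝ} (hc : 0 ≤ c) (x : Fin N → ℝ) :
    lpnorm p (c • x) = c * lpnorm p x := by
  have hpt : 0 < p.toReal := ENNReal.toReal_pos hp hp'
  unfold lpnorm
  rw [if_neg hp', if_neg hp']
  have : ∑ i, |(c • x) i| ^ p.toReal = c ^ p.toReal * ∑ i, |x i| ^ p.toReal := by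
    rw [Finset.mul_sum]
    refine Finset.sum_congr rfl fun i _ => ?_
    rw [Pi.smul_apply, smul_eq_mul, abs_mul, abs_of_nonneg hc,
      Real.mul_rpow hc (abs_nonneg _)]
  rw [this, Real.mul_rpow (by positivity) (by positivity),
    ← Real.rpow_mul hc, mul_one_div_cancel hpt.ne', Real.rpow_one]

lemma apply_eq_sum (B : (Fin N → ℝ) →ₗ[ℝ] (Fin N → ℝ)) (x : Fin N → ℝ) (i : Fin N) :
    B x i = ∑ j, x j * B (Pi.single j 1) i := by
  have hx : x = ∑ j, x j • (Pi.single j 1 : Fin N → ℝ) := by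
    funext t
    simp [Pi.single_apply, Finset.sum_ite_eq', mul_comm]
  conv_lhs => rw [hx]
  rw [map_sum]
  simp [Finset.sum_apply]

lemma sub_apply_eq_sum (A : (Fin N → ℝ) →ₗ[ℝ] (Fin N → ℝ)) (x : Fin N → ℝ) (i : Fin N) :
    (x - A x) i = ∑ j, ((Pi.single j 1 : Fin N → ℝ) - A (Pi.single j 1)) i * x j := by
  have h2 : x i = ∑ j, x j * (Pi.single j 1 : Fin N → ℝ) i := by
    simp [Pi.single_apply, Finset.sum_ite_eq', mul_comm]
  rw [Pi.sub_apply, apply_eq_sum A x i, h2, ← Finset.sum_sub_distrib]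
  refine Finset.sum_congr rfl fun j _ => ?_
  simp only [Pi.sub_apply]
  ring

lemma core_frobenius {k : ℕ} (A : (Fin N → ℝ) →ₗ[ℝ] (Fin N → ℝ))
    (hA : Module.rank ℝ (LinearMap.range A) < (k : Cardinal)) :
    (N : ℝ) + 1 - k ≤
      ∑ i, ∑ j, (((Pi.single j 1 : Fin N → ℝ) - A (Pi.single j 1)) i) ^ 2 := by
  classical
  set M : Fin N → Fin N → ℝ :=
    fun i j => ((Pi.single j 1 : Fin N → ℝ) - A (Pi.single j 1)) i with hM
  have hT : ∀ (x : Fin N → ℝ) (i : Fin N), x i - A x i = ∑ j, M i j * x j := by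
    intro x i
    have := sub_apply_eq_sum A x i
    rw [Pi.sub_apply] at this
    exact this
  set E := EuclideanSpace ℝ (Fin N)
  set e : E ≃ₗ[ℝ] (Fin N → ℝ) := WithLp.linearEquiv 2 ℝ (Fin N → ℝ) with he
  set A₂ : E →ₗ[ℝ] (Fin N → ℝ) := A.comp e.toLinearMap with hA₂
  set K := LinearMap.ker A₂ with hK
  have hrange : LinearMap.range A₂ = LinearMap.range A := by
    rw [hA₂, LinearMap.range_comp, LinearEquiv.range, Submodule.map_top]
  have hfr : Module.finrank ℝ (LinearMap.range A) < k := by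
    have h1 : (Module.finrank ℝ (LinearMap.range A) : Cardinal) < (k : Cardinal) := by
      rw [Module.finrank_eq_rank]; exact hA
    exact_mod_cast h1
  have hrn := LinearMap.finrank_range_add_finrank_ker A₂
  rw [hrange] at hrn
  have hEfin : Module.finrank ℝ E = N := finrank_euclideanSpace_fin
  rw [hEfin] at hrn
  set m := Module.finrank ℝ K with hm
  have hmk : (N : ℝ) + 1 - k ≤ m := by
    have : N + 1 ≤ m + k := by omega
    have := (Nat.cast_le (α := ℝ)).mpr this
    push_cast at this
    linarith
  set b := stdOrthonormalBasis ℝ K with hb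
  set v : Fin m → E := fun l => ((b l : K) : E) with hv
  have hvon : Orthonormal ℝ v := b.orthonormal.comp_linearIsometry K.subtypeₗᵢ
  have hAv : ∀ l, A (e (v l)) = 0 := by
    intro l
    have hmem : v l ∈ K := by rw [hv]; exact SetLike.coe_mem _
    have := LinearMap.mem_ker.mp hmem
    rw [hA₂] at this
    simpa using this
  have hwfix : ∀ (l : Fin m) (i : Fin N), e (v l) i = ∑ j, M i j * e (v l) j := by
    intro l i
    have := hT (e (v l)) i
    rw [hAv l] at this
    simpa using this
  set ρ : Fin N → E := fun i => (WithLp.equiv 2 (Fin N → ℝ)).symm (M i) with hρ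
  have hρ_app : ∀ i j, ρ i j = M i j := fun i j => rfl
  have hv_app : ∀ l j, v l j = e (v l) j := fun l j => rfl
  have hinner : ∀ (l : Fin m) (i : Fin N), (inner ℝ (v l) (ρ i) : ℝ) = e (v l) i := by
    intro l i
    rw [PiLp.inner_apply]
    rw [hwfix l i]
    refine Finset.sum_congr rfl fun j _ => ?_
    rw [RCLike.inner_apply]
    simp [hρ_app, hv_app, mul_comm]
  have hρnorm : ∀ i, ‖ρ i‖ ^ 2 = ∑ j, M i j ^ 2 := by
    intro i
    rw [EuclideanSpace.norm_eq, Real.sq_sqrt (by positivity)]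
    refine Finset.sum_congr rfl fun j _ => ?_
    rw [hρ_app, Real.norm_eq_abs, sq_abs]
  have hvnorm : ∀ l, ∑ i, (e (v l) i) ^ 2 = 1 := by
    intro l
    have h1 : ‖v l‖ = 1 := hvon.1 l
    have h2 : ‖v l‖ ^ 2 = ∑ i, (e (v l) i) ^ 2 := by
      rw [EuclideanSpace.norm_eq, Real.sq_sqrt (by positivity)]
      refine Finset.sum_congr rfl fun i _ => ?_
      rw [← hv_app, Real.norm_eq_abs, sq_abs]
    rw [← h2, h1, one_pow]
  have hbessel : ∀ i, ∑ l, (e (v l) i) ^ 2 ≤ ∑ j, M i j ^ 2 := by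
    intro i
    have := hvon.sum_inner_products_le (𝕜 := ℝ) (ρ i) (s := Finset.univ)
    rw [hρnorm i] at this
    refine le_trans (le_of_eq ?_) this
    refine Finset.sum_congr rfl fun l _ => ?_
    rw [hinner, Real.norm_eq_abs, sq_abs]
  calc (N : ℝ) + 1 - k ≤ m := hmk
    _ = ∑ l : Fin m, ∑ i, (e (v l) i) ^ 2 := by
        rw [Finset.sum_congr rfl fun l _ => hvnorm l]; simp
    _ = ∑ i, ∑ l : Fin m, (e (v l) i) ^ 2 := Finset.sum_comm
    _ ≤ ∑ i, ∑ j, M i j ^ 2 := Finset.sum_le_sum fun i _ => hbessel i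

end auxlemmas

/-- If `0 < p₁ ≤ p₂ ≤ 2` or `2 ≤ p₁ ≤ p₂ ≤ ∞`, then
`a_k(id : ℓ_{p₁}^N → ℓ_{p₂}^N) ∼ 1` uniformly for `k ≤ N/4`. -/
theorem approx_number_id_finite_lp_one
    (p₁ p₂ : ℝ≥0∞)
    (h : (0 < p₁ ∧ p₁ ≤ p₂ ∧ p₂ ≤ 2) ∨ (2 ≤ p₁ ∧ p₁ ≤ p₂ ∧ p₂ ≤ ∞)) :
    ∃ c C : ℝ, 0 < c ∧ c ≤ C ∧
      ∀ N k : ℕ, 1 ≤ k → (k : ℝ) ≤ (N : ℝ) / 4 →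
        c ≤ approxNumId p₁ p₂ N k ∧ approxNumId p₁ p₂ N k ≤ C := by
  classical
  refine ⟨1/2, 1, by norm_num, by norm_num, ?_⟩
  intro N k hk hkN
  have hp1 : p₁ ≠ 0 := by
    rcases h with ⟨h0, _, _⟩ | ⟨h0, _, _⟩
    · exact h0.ne'
    · intro hh; rw [hh] at h0; exact absurd (le_zero_iff.mp h0) (by norm_num)
  have h12 : p₁ ≤ p₂ := by rcases h with ⟨_, h', _⟩ | ⟨_, h', _⟩ <;> exact h'
  have hp2 : p₂ ≠ 0 := fun hh => hp1 (le_zero_iff.mp (hh ▸ h12))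
  have hk1 : (1:ℝ) ≤ k := by exact_mod_cast hk
  have hN4 : (4:ℝ) ≤ (N:ℝ) := by linarith
  have hN0 : 0 < N := by exact_mod_cast (by linarith : (0:ℝ) < (N:ℝ))
  haveI : Nonempty (Fin N) := Fin.pos_iff_nonempty.mp hN0
  -- the inner sets
  set S : ((Fin N → ℝ) →ₗ[ℝ] (Fin N → ℝ)) → Set ℝ := fun A =>
    {c : ℝ | ∃ x : Fin N → ℝ, lpnorm p₁ x ≤ 1 ∧ c = lpnorm p₂ (x - A x)} with hS
  have hS0 : ∀ A, (0:ℝ) ∈ S A := by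
    intro A
    refine ⟨0, by rw [lpnorm_zero_eq hp1]; norm_num, ?_⟩
    rw [map_zero, sub_zero, lpnorm_zero_eq hp2]
  have hSBdd : ∀ A, BddAbove (S A) := by
    intro A
    refine ⟨lpnorm p₂ (fun i => 1 + ∑ j, |A (Pi.single j 1) i|), ?_⟩
    rintro c ⟨x, hx, rfl⟩
    apply lpnorm_mono_entries
    intro i
    have hxj : ∀ j, |x j| ≤ 1 := fun j => le_trans (abs_le_lpnorm hp1 x j) hx
    have hAxi : |A x i| ≤ ∑ j, |A (Pi.single j 1) i| := by
      rw [apply_eq_sum A x i]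
      refine le_trans (Finset.abs_sum_le_sum_abs _ _) ?_
      refine Finset.sum_le_sum fun j _ => ?_
      rw [abs_mul]
      exact mul_le_of_le_one_left (abs_nonneg _) (hxj j)
    have h1 : |(x - A x) i| ≤ 1 + ∑ j, |A (Pi.single j 1) i| := by
      rw [Pi.sub_apply]
      calc |x i - A x i| ≤ |x i| + |A x i| := abs_sub _ _
        _ ≤ 1 + ∑ j, |A (Pi.single j 1) i| := add_le_add (hxj i) hAxi
    exact h1.trans (le_abs_self _)
  -- every member of the outer set is at least 1/2
  have hlow : ∀ r ∈ {r : ℝ | ∃ A : (Fin N → ℝ) →ₗ[ℝ] (Fin N → ℝ),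
      Module.rank ℝ (LinearMap.range A) < k ∧ r = sSup (S A)}, (1/2 : ℝ) ≤ r := by
    rintro r ⟨A, hA, rfl⟩
    set M : Fin N → Fin N → ℝ :=
      fun i j => ((Pi.single j 1 : Fin N → ℝ) - A (Pi.single j 1)) i with hM
    have htot : (3/4 : ℝ) * N ≤ ∑ i, ∑ j, M i j ^ 2 := by
      refine le_trans ?_ (core_frobenius A hA)
      linarith
    have hcase : (p₂ ≤ 2 ∧ p₂ ≠ ∞ ∧ p₁ ≠ ∞) ∨ 2 ≤ p₁ := by
      rcases h with ⟨_, h12', h22⟩ | ⟨h21, _, _⟩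
      · left
        have hp2top : p₂ ≠ ∞ := fun hh => by
          rw [hh] at h22; exact absurd (top_le_iff.mp h22) (by norm_num)
        exact ⟨h22, hp2top, fun hh => hp2top (top_le_iff.mp (hh ▸ h12'))⟩
      · right; exact h21
    rcases hcase with ⟨hp22, hp2top, hp1top⟩ | hp12
    · -- column case
      obtain ⟨j, hj⟩ : ∃ j, (3/4 : ℝ) ≤ ∑ i, M i j ^ 2 := by
        by_contra hcon
        push_neg at hcon
        have hswap : ∑ i, ∑ j, M i j ^ 2 = ∑ j, ∑ i, M i j ^ 2 := Finset.sum_comm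
        have hlt : ∑ j, ∑ i, M i j ^ 2 < ∑ _j : Fin N, (3/4 : ℝ) :=
          Finset.sum_lt_sum_of_nonempty Finset.univ_nonempty (fun j _ => hcon j)
        rw [Finset.sum_const, Finset.card_univ, Fintype.card_fin, nsmul_eq_mul] at hlt
        rw [hswap] at htot
        linarith
      have hmem : lpnorm p₂ ((Pi.single j 1 : Fin N → ℝ) - A (Pi.single j 1)) ∈ S A :=
        ⟨Pi.single j 1, le_of_eq (lpnorm_single hp1 hp1top j), rfl⟩
      have h2le : lpnorm 2 ((Pi.single j 1 : Fin N → ℝ) - A (Pi.single j 1))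
          ≤ lpnorm p₂ ((Pi.single j 1 : Fin N → ℝ) - A (Pi.single j 1)) :=
        lpnorm_mono_p hp2 hp22 _
      have hhalf : (1/2 : ℝ) ≤ lpnorm 2 ((Pi.single j 1 : Fin N → ℝ) - A (Pi.single j 1)) := by
        rw [lpnorm_two_eq]
        apply Real.le_sqrt_of_sq_le
        calc ((1:ℝ)/2) ^ 2 = 1/4 := by norm_num
          _ ≤ 3/4 := by norm_num
          _ ≤ ∑ i, M i j ^ 2 := hj
          _ = ∑ i, (((Pi.single j 1 : Fin N → ℝ) - A (Pi.single j 1)) i) ^ 2 := rfl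
      exact le_trans (hhalf.trans h2le) (le_csSup (hSBdd A) hmem)
    · -- row case
      obtain ⟨i₀, hi⟩ : ∃ i₀, (3/4 : ℝ) ≤ ∑ j, M i₀ j ^ 2 := by
        by_contra hcon
        push_neg at hcon
        have hlt : ∑ i, ∑ j, M i j ^ 2 < ∑ _i : Fin N, (3/4 : ℝ) :=
          Finset.sum_lt_sum_of_nonempty Finset.univ_nonempty (fun i _ => hcon i)
        rw [Finset.sum_const, Finset.card_univ, Fintype.card_fin, nsmul_eq_mul] at hlt
        linarith
      set r' : Fin N → ℝ := fun j => M i₀ j with hr'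
      set t := lpnorm 2 r' with ht
      have ht2 : t ^ 2 = ∑ j, r' j ^ 2 := by
        rw [ht, lpnorm_two_eq, Real.sq_sqrt (by positivity)]
      have htge : (1/2 : ℝ) ≤ t := by
        rw [ht, lpnorm_two_eq]
        apply Real.le_sqrt_of_sq_le
        calc ((1:ℝ)/2) ^ 2 = 1/4 := by norm_num
          _ ≤ 3/4 := by norm_num
          _ ≤ ∑ j, r' j ^ 2 := hi
      have ht0 : 0 < t := lt_of_lt_of_le (by norm_num) htge
      set x : Fin N → ℝ := t⁻¹ • r' with hx
      have hx2 : lpnorm 2 x = 1 := by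
        rw [hx, lpnorm_smul_nonneg (by norm_num) (by norm_num) (inv_nonneg.mpr ht0.le),
          ← ht, inv_mul_cancel₀ ht0.ne']
      have hx1 : lpnorm p₁ x ≤ 1 := by
        rw [← hx2]
        exact lpnorm_mono_p (by norm_num) hp12 x
      have hval : (x - A x) i₀ = t := by
        rw [sub_apply_eq_sum A x i₀]
        have : ∀ j, ((Pi.single j 1 : Fin N → ℝ) - A (Pi.single j 1)) i₀ * x j
            = t⁻¹ * (M i₀ j * r' j) := by
          intro j
          rw [hx, Pi.smul_apply, smul_eq_mul]
          have hMj : ((Pi.single j 1 : Fin N → ℝ) - A (Pi.single j 1)) i₀ = M i₀ j := rfl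
          rw [hMj]
          ring
        rw [Finset.sum_congr rfl fun j _ => this j, ← Finset.mul_sum]
        have hsum : ∑ j, M i₀ j * r' j = t ^ 2 := by
          rw [ht2]
          refine Finset.sum_congr rfl fun j _ => ?_
          have : r' j = M i₀ j := rfl
          rw [this]
          ring
        rw [hsum, sq]
        field_simp
      have hmem : lpnorm p₂ (x - A x) ∈ S A := ⟨x, hx1, rfl⟩
      have hhalf : (1/2 : ℝ) ≤ lpnorm p₂ (x - A x) := by
        refine le_trans htge ?_
        calc t = |(x - A x) i₀| := by rw [hval, abs_of_pos ht0]
          _ ≤ lpnorm p₂ (x - A x) := abs_le_lpnorm hp2 _ i₀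
      exact le_trans hhalf (le_csSup (hSBdd A) hmem)
  -- outer set is nonempty via A = 0
  have hmem0 : sSup (S 0) ∈ {r : ℝ | ∃ A : (Fin N → ℝ) →ₗ[ℝ] (Fin N → ℝ),
      Module.rank ℝ (LinearMap.range A) < k ∧ r = sSup (S A)} := by
    refine ⟨0, ?_, rfl⟩
    rw [LinearMap.range_zero, rank_bot]
    exact_mod_cast Nat.pos_of_ne_zero (by omega)
  constructor
  · exact le_csInf ⟨_, hmem0⟩ hlow
  · refine le_trans (csInf_le ⟨1/2, hlow⟩ hmem0) ?_
    refine csSup_le ⟨0, hS0 0⟩ ?_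
    rintro c ⟨x, hx, rfl⟩
    simp only [LinearMap.zero_apply, sub_zero]
    exact (lpnorm_mono_p hp1 h12 x).trans hx
end

section
/- Let 0 < p ≤ 1 and 0 < λ < 1. Then there exists a constant C_λ > 0 depending only on λ (and p) such that for all N, k ∈ ℕ: a_k(id : ℓ_p^N → ℓ_∞^N) ≤ 1 if k ≤ N^λ; a_k(id : ℓ_p^N → ℓ_∞^N) ≤ C_λ · k^{−1/2} if N^λ < k ≤ N; and a_k(id : ℓ_p^N → ℓ_∞^N) = 0 if k > N. -/
open scoped ENNReal

open scoped NNReal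

section Aux

open Complex Finset

noncomputable def chr (p : ℕ) (n : ℤ) : ℂ :=
  Complex.exp (2 * Real.pi * Complex.I * n / (p:ℂ)^2)

variable {p : ℕ}

lemma chr_add (a b : ℤ) : chr p (a + b) = chr p a * chr p b := by
  rw [chr, chr, chr, ← Complex.exp_add]
  congr 1
  push_cast
  ring

lemma chr_sq_mul (hp : (p:ℂ) ≠ 0) (t : ℤ) : chr p ((p:ℤ)^2 * t) = 1 := by
  have : (2 * Real.pi * Complex.I * ((p:ℤ)^2 * t : ℤ) / (p:ℂ)^2) = t * (2 * Real.pi * Complex.I) := by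
    push_cast
    field_simp
  rw [chr, this, Complex.exp_int_mul_two_pi_mul_I]

lemma chr_abs (n : ℤ) : ‖chr p n‖ = 1 := by
  have : (2 * Real.pi * Complex.I * n / (p:ℂ)^2) = ((2 * Real.pi * n / (p:ℝ)^2 : ℝ) : ℂ) * Complex.I := by
    push_cast
    ring
  rw [chr, this, Complex.norm_exp_ofReal_mul_I]

lemma chr_natmul (a : ℤ) (v : ℕ) : chr p (a * v) = (chr p a) ^ v := by
  induction v with
  | zero => simp [chr]
  | succ n ih =>
      have : a * ((n:ℤ) + 1) = a * n + a := by ring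
      rw [Nat.cast_succ, this, chr_add, ih, pow_succ]

lemma chr_p_eq_one_iff (hp : 0 < p) (t : ℤ) : chr p ((p:ℤ) * t) = 1 ↔ (p:ℤ) ∣ t := by
  have hp0 : (p:ℂ) ≠ 0 := Nat.cast_ne_zero.mpr hp.ne'
  have hπ : (Real.pi : ℂ) ≠ 0 := by exact_mod_cast Real.pi_ne_zero
  rw [chr, Complex.exp_eq_one_iff]
  constructor
  · rintro ⟨n, hn⟩
    refine ⟨n, ?_⟩
    have h2 : (2:ℂ) * Real.pi * Complex.I ≠ 0 := by
      simp [Complex.I_ne_zero, hπ]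
    field_simp at hn
    -- hn : 2 * π * I * (p * t) = n * (2*π*I) * p^2  (roughly)
    have key : (t : ℂ) = (p : ℂ) * n := by
      have h3 : (2 * (Real.pi:ℂ) * Complex.I * p) * (t:ℂ)
          = (2 * (Real.pi:ℂ) * Complex.I * p) * ((p:ℂ) * n) := by
        push_cast at hn
        linear_combination (2 * (Real.pi:ℂ) * Complex.I) * hn
      have h4 : (2 * (Real.pi:ℂ) * Complex.I * p) ≠ 0 := by
        simp [Complex.I_ne_zero, hπ, hp0]
      exact mul_left_cancel₀ h4 h3
    exact_mod_cast key
  · rintro ⟨c, rfl⟩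
    refine ⟨c, ?_⟩
    push_cast
    field_simp

lemma chr_geom (hp : 0 < p) {t : ℤ} (ht : ¬ (p:ℤ) ∣ t) :
    ∑ v ∈ Finset.range p, chr p ((p:ℤ) * t * v) = 0 := by
  have hne : chr p ((p:ℤ) * t) ≠ 1 := fun h => ht ((chr_p_eq_one_iff hp t).mp h)
  have : ∑ v ∈ Finset.range p, chr p ((p:ℤ) * t * v)
      = ∑ v ∈ Finset.range p, (chr p ((p:ℤ) * t))^v := by
    refine Finset.sum_congr rfl fun v _ => ?_
    exact chr_natmul _ v
  rw [this, geom_sum_eq hne]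
  have hpow : chr p ((p:ℤ) * t) ^ p = 1 := by
    rw [← chr_natmul]
    have : (p:ℤ) * t * p = (p:ℤ)^2 * t := by ring
    rw [this, chr_sq_mul (Nat.cast_ne_zero.mpr hp.ne')]
  rw [hpow]
  simp

-- Taylor: monomial version
lemma taylor_mono (U P V : ℤ) (n : ℕ) :
    ∃ r : ℤ, (U + P * V)^(n+1) = U^(n+1) + (n+1) * U^n * P * V + P^2 * r := by
  induction n with
  | zero => exact ⟨0, by ring⟩
  | succ n ih =>
      obtain ⟨r, hr⟩ := ih
      refine ⟨(n+1) * U^n * V^2 + r * (U + P * V), ?_⟩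
      have : (U + P*V)^(n+2) = (U + P*V)^(n+1) * (U + P*V) := by ring
      rw [this, hr]
      push_cast
      ring

lemma card_roots_aux (p s : ℕ) (hp : p.Prime) (hsp : s < p) (b : Fin s → ℤ)
    (hb : ∃ m, ¬ ((p:ℤ) ∣ b m)) :
    ((Finset.range p).filter
      (fun u : ℕ => (p:ℤ) ∣ ∑ m : Fin s, ((m.1:ℤ)+1) * b m * (u:ℤ)^(m.1:ℕ))).card ≤ s := by
  haveI : Fact p.Prime := ⟨hp⟩
  obtain ⟨m₀, hm₀⟩ := hb
  set c : Fin s → ZMod p := fun m => ((((m.1:ℤ)+1) * b m : ℤ) : ZMod p) with hc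
  set P : Polynomial (ZMod p) :=
    ∑ m : Fin s, Polynomial.C (c m) * Polynomial.X ^ (m.1:ℕ) with hP
  have hcoeff : P.coeff m₀.1 = c m₀ := by
    rw [hP, Polynomial.finset_sum_coeff]
    rw [Finset.sum_eq_single m₀]
    · rw [Polynomial.coeff_C_mul, Polynomial.coeff_X_pow, if_pos rfl, mul_one]
    · intro m _ hne
      have hv : ¬ (m₀.1 = m.1) := fun h => hne (Fin.val_injective h.symm)
      rw [Polynomial.coeff_C_mul, Polynomial.coeff_X_pow, if_neg hv, mul_zero]
    · simp
  have hcne : c m₀ ≠ 0 := by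
    rw [hc]
    simp only [Int.cast_mul]
    apply mul_ne_zero
    · have h1 : ((((m₀.1:ℤ)+1) : ℤ) : ZMod p) = ((m₀.1+1 : ℕ) : ZMod p) := by push_cast; ring
      rw [h1, Ne, ZMod.natCast_eq_zero_iff]
      intro hdvd
      have := Nat.le_of_dvd (Nat.succ_pos _) hdvd
      omega
    · rw [Ne, ZMod.intCast_zmod_eq_zero_iff_dvd]
      exact hm₀
  have hPne : P ≠ 0 := by
    intro h
    rw [h, Polynomial.coeff_zero] at hcoeff
    exact hcne hcoeff.symm
  have hdeg : P.natDegree ≤ s - 1 := by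
    apply Polynomial.natDegree_sum_le_of_forall_le
    intro m _
    exact le_trans (Polynomial.natDegree_C_mul_X_pow_le _ _) (Nat.le_sub_one_of_lt m.2)
  have hroot : ∀ u ∈ (Finset.range p).filter
      (fun u : ℕ => (p:ℤ) ∣ ∑ m : Fin s, ((m.1:ℤ)+1) * b m * (u:ℤ)^(m.1:ℕ)),
      ((u:ℕ) : ZMod p) ∈ P.roots.toFinset := by
    intro u hu
    rw [Finset.mem_filter] at hu
    rw [Multiset.mem_toFinset, Polynomial.mem_roots hPne]
    have heval : P.eval ((u:ℕ) : ZMod p)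
        = (((∑ m : Fin s, ((m.1:ℤ)+1) * b m * (u:ℤ)^(m.1:ℕ)) : ℤ) : ZMod p) := by
      rw [hP, Polynomial.eval_finset_sum]
      push_cast [hc]
      simp
    rw [Polynomial.IsRoot, heval, ZMod.intCast_zmod_eq_zero_iff_dvd]
    exact hu.2
  have hinj : Set.InjOn (fun u : ℕ => ((u:ℕ) : ZMod p)) ((Finset.range p).filter
      (fun u : ℕ => (p:ℤ) ∣ ∑ m : Fin s, ((m.1:ℤ)+1) * b m * (u:ℤ)^(m.1:ℕ)) : Finset ℕ) := by
    intro u hu v hv huv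
    simp only [Finset.coe_filter, Set.mem_setOf_eq, Finset.mem_range] at hu hv
    have h1 := ZMod.val_cast_of_lt hu.1
    have h2 := ZMod.val_cast_of_lt hv.1
    simp only at huv
    rw [← h1, ← h2, huv]
  calc ((Finset.range p).filter _).card
      ≤ P.roots.toFinset.card := Finset.card_le_card_of_injOn _ hroot hinj
    _ ≤ Multiset.card P.roots := Multiset.toFinset_card_le _
    _ ≤ P.natDegree := Polynomial.card_roots' P
    _ ≤ s := le_trans hdeg (Nat.sub_le s 1)

lemma taylor_sum (s : ℕ) (b : Fin s → ℤ) (P U V : ℤ) :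
    ∃ r : ℤ, ∑ m : Fin s, b m * (U + P * V)^(m.1+1)
      = (∑ m : Fin s, b m * U^(m.1+1))
        + P * (V * ∑ m : Fin s, ((m.1:ℤ)+1) * b m * U^(m.1:ℕ)) + P^2 * r := by
  have h1 : ∀ m : Fin s, ∃ r : ℤ,
      (U + P * V)^(m.1+1) = U^(m.1+1) + ((m.1:ℤ)+1) * U^(m.1:ℕ) * P * V + P^2 * r := by
    intro m
    obtain ⟨r, hr⟩ := taylor_mono U P V m.1
    exact ⟨r, by push_cast at hr ⊢; linear_combination hr⟩
  choose r hr using h1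
  refine ⟨∑ m : Fin s, b m * r m, ?_⟩
  have : ∑ m : Fin s, b m * (U + P * V)^(m.1+1)
      = ∑ m : Fin s, (b m * U^(m.1+1) + P * (V * (((m.1:ℤ)+1) * b m * U^(m.1:ℕ)))
          + P^2 * (b m * r m)) := by
    refine Finset.sum_congr rfl fun m _ => ?_
    rw [hr m]
    ring
  rw [this, Finset.sum_add_distrib, Finset.sum_add_distrib, ← Finset.mul_sum, ← Finset.mul_sum,
    ← Finset.mul_sum]

lemma expsum (p s : ℕ) (hp : p.Prime) (hsp : s < p) (b : Fin s → ℤ)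
    (hb : ∃ m, ¬ ((p:ℤ) ∣ b m)) :
    ‖∑ x ∈ Finset.range (p^2), chr p (∑ m : Fin s, b m * (x:ℤ)^(m.1+1))‖
      ≤ (s:ℝ) * p := by
  have hp0 : 0 < p := hp.pos
  set H : ℕ → ℤ := fun x => ∑ m : Fin s, b m * (x:ℤ)^(m.1+1) with hH
  set D : ℕ → ℤ := fun x => ∑ m : Fin s, ((m.1:ℤ)+1) * b m * (x:ℤ)^(m.1:ℕ) with hD
  -- reindex over (u, v) ∈ range p × range p, x = u + p * v
  have hre : ∑ x ∈ Finset.range (p^2), chr p (H x)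
      = ∑ q ∈ Finset.range p ×ˢ Finset.range p, chr p (H (q.1 + p * q.2)) := by
    refine (Finset.sum_nbij' (fun q : ℕ × ℕ => q.1 + p * q.2)
      (fun x : ℕ => (x % p, x / p)) ?_ ?_ ?_ ?_ ?_).symm
    · intro q hq
      rw [Finset.mem_product, Finset.mem_range, Finset.mem_range] at hq
      rw [Finset.mem_range, pow_two]
      calc q.1 + p * q.2 < p + p * q.2 := by omega
        _ ≤ p + p * (p-1) := by
              have : q.2 ≤ p - 1 := by omega
              exact Nat.add_le_add_left (Nat.mul_le_mul_left _ this) _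
        _ = p * p := by
              cases p with
              | zero => omega
              | succ n => rw [Nat.succ_sub_one]; ring
    · intro x hx
      rw [Finset.mem_range, pow_two] at hx
      rw [Finset.mem_product, Finset.mem_range, Finset.mem_range]
      constructor
      · exact Nat.mod_lt _ hp0
      · exact Nat.div_lt_of_lt_mul hx
    · intro q hq
      rw [Finset.mem_product, Finset.mem_range, Finset.mem_range] at hq
      simp [Nat.add_mul_mod_self_left, Nat.mod_eq_of_lt hq.1, Nat.add_mul_div_left _ _ hp0,
        Nat.div_eq_of_lt hq.1]
    · intro x _
      simp [Nat.mod_add_div]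
    · intro q _
      rfl
  rw [hre, Finset.sum_product]
  -- inner: per u, split chr
  have hsplit : ∀ u v : ℕ, chr p (H (u + p * v)) = chr p (H u) * chr p ((p:ℤ) * D u * v) := by
    intro u v
    obtain ⟨r, hr⟩ := taylor_sum s b (p:ℤ) (u:ℤ) (v:ℤ)
    have harg : H (u + p * v) = H u + ((p:ℤ) * D u * v + (p:ℤ)^2 * r) := by
      rw [hH, hD]
      push_cast
      push_cast at hr
      linear_combination hr
    rw [harg, chr_add, chr_add, chr_sq_mul (Nat.cast_ne_zero.mpr hp0.ne')]
    ring
  have hinner : ∀ u : ℕ, ∑ v ∈ Finset.range p, chr p (H (u + p * v))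
      = chr p (H u) * (if (p:ℤ) ∣ D u then (p:ℂ) else 0) := by
    intro u
    by_cases hd : (p:ℤ) ∣ D u
    · obtain ⟨t, ht⟩ := hd
      have : ∀ v ∈ Finset.range p, chr p (H (u + p * v)) = chr p (H u) := by
        intro v _
        rw [hsplit u v, ht]
        have : (p:ℤ) * ((p:ℤ) * t) * (v:ℤ) = (p:ℤ)^2 * (t * v) := by ring
        rw [this, chr_sq_mul (Nat.cast_ne_zero.mpr hp0.ne'), mul_one]
      rw [Finset.sum_congr rfl this, Finset.sum_const, Finset.card_range, if_pos ⟨t, ht⟩]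
      simp [mul_comm]
    · rw [if_neg hd, mul_zero]
      have : ∀ v ∈ Finset.range p, chr p (H (u + p * v))
          = chr p (H u) * chr p ((p:ℤ) * D u * v) := fun v _ => hsplit u v
      rw [Finset.sum_congr rfl this, ← Finset.mul_sum, chr_geom hp0 hd, mul_zero]
  have := Finset.sum_congr rfl (fun u (_ : u ∈ Finset.range p) => hinner u)
  rw [this]
  -- bound
  calc ‖∑ u ∈ Finset.range p, chr p (H u) * (if (p:ℤ) ∣ D u then (p:ℂ) else 0)‖
      ≤ ∑ u ∈ Finset.range p, ‖chr p (H u) * (if (p:ℤ) ∣ D u then (p:ℂ) else 0)‖ :=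
        norm_sum_le _ _
    _ = ∑ u ∈ Finset.range p, (if (p:ℤ) ∣ D u then (p:ℝ) else 0) := by
        refine Finset.sum_congr rfl fun u _ => ?_
        rw [norm_mul, chr_abs, one_mul]
        by_cases hd : (p:ℤ) ∣ D u
        · rw [if_pos hd, if_pos hd]
          simp
        · rw [if_neg hd, if_neg hd]
          simp
    _ = ((Finset.range p).filter (fun u : ℕ => (p:ℤ) ∣ D u)).card * (p:ℝ) := by
        rw [Finset.sum_ite, Finset.sum_const, Finset.sum_const_zero, add_zero, nsmul_eq_mul]
    _ ≤ (s:ℝ) * p := by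
        have hle : ((Finset.range p).filter (fun u : ℕ => (p:ℤ) ∣ D u)).card ≤ s :=
          card_roots_aux p s hp hsp b hb
        have hcast : (((Finset.range p).filter (fun u : ℕ => (p:ℤ) ∣ D u)).card : ℝ) ≤ (s:ℝ) :=
          Nat.cast_le.mpr hle
        exact mul_le_mul_of_nonneg_right hcast (Nat.cast_nonneg _)

open Matrix in
lemma key_matrix (p s N : ℕ) (hp : p.Prime) (hsp : s < p) (hN : N ≤ p^s) :
    ∃ A : (Fin N → ℝ) →ₗ[ℝ] (Fin N → ℝ),
      Module.rank ℝ (LinearMap.range A) ≤ (2*p^2 : ℕ) ∧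
      ∀ x : Fin N → ℝ, ∀ i, |x i - A x i| ≤ ((s:ℝ) / p) * ∑ j, |x j| := by
  have hp0 : 0 < p := hp.pos
  have hp0' : (p:ℝ) ≠ 0 := Nat.cast_ne_zero.mpr hp0.ne'
  -- embedding of indices into coefficient vectors
  have hcard : Fintype.card (Fin N) ≤ Fintype.card (Fin s → Fin p) := by
    rw [Fintype.card_fin, Fintype.card_fun, Fintype.card_fin, Fintype.card_fin]
    exact hN
  obtain ⟨emb⟩ := Function.Embedding.nonempty_of_card_le hcard
  -- angles
  set g : (Fin s → Fin p) → ℕ → ℤ := fun c x => ∑ m : Fin s, ((c m : ℕ) : ℤ) * (x:ℤ)^(m.1+1)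
    with hg
  set θ : Fin N → ℕ → ℝ := fun j x => 2 * Real.pi * (g (emb j) x) / (p:ℝ)^2 with hθ
  set B : Matrix (Fin 2 × Fin (p^2)) (Fin N) ℝ :=
    fun tx j => (if tx.1 = 0 then Real.cos (θ j tx.2) else Real.sin (θ j tx.2)) / p with hB
  set M : Matrix (Fin N) (Fin N) ℝ := Bᵀ * B with hM
  refine ⟨M.mulVecLin, ?_, ?_⟩
  · -- rank bound
    rw [hM, Matrix.mulVecLin_mul]
    refine le_trans (Submodule.rank_mono (LinearMap.range_comp_le_range _ _)) ?_
    refine le_trans (LinearMap.rank_le_domain _) ?_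
    rw [rank_fun']
    rw [Fintype.card_prod, Fintype.card_fin, Fintype.card_fin]
  · -- entrywise bound
    have hgram : ∀ i j : Fin N, M i j
        = (1/(p:ℝ)^2) * ∑ x ∈ Finset.range (p^2), Real.cos (θ i x - θ j x) := by
      intro i j
      rw [hM]
      have : (Bᵀ * B) i j = ∑ tx : Fin 2 × Fin (p^2), B tx i * B tx j := by
        rw [Matrix.mul_apply]
        rfl
      have e0 : ∀ (x : Fin (p^2)) (j : Fin N), B (0, x) j = Real.cos (θ j (x:ℕ)) / p := by
        intro x j
        simp [hB]
      have e1 : ∀ (x : Fin (p^2)) (j : Fin N), B (1, x) j = Real.sin (θ j (x:ℕ)) / p := by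
        intro x j
        rw [hB]
        norm_num
      rw [this, Fintype.sum_prod_type, Fin.sum_univ_two]
      simp only [e0, e1]
      have hc : ∀ x : Fin (p^2),
          Real.cos (θ i (x:ℕ)) / p * (Real.cos (θ j (x:ℕ)) / p)
            + Real.sin (θ i (x:ℕ)) / p * (Real.sin (θ j (x:ℕ)) / p)
          = (1/(p:ℝ)^2) * Real.cos (θ i (x:ℕ) - θ j (x:ℕ)) := by
        intro x
        rw [Real.cos_sub]
        ring
      rw [← Finset.sum_add_distrib]
      rw [Finset.sum_congr rfl (fun x _ => hc x)]
      rw [← Finset.mul_sum]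
      congr 1
      exact Fin.sum_univ_eq_sum_range (fun x => Real.cos (θ i x - θ j x)) (p^2)
    have hdiag : ∀ i, M i i = 1 := by
      intro i
      rw [hgram i i]
      have : ∀ x ∈ Finset.range (p^2), Real.cos (θ i x - θ i x) = 1 := by
        intro x _
        simp
      rw [Finset.sum_congr rfl this, Finset.sum_const, Finset.card_range]
      simp
      field_simp
    have hoff : ∀ i j : Fin N, i ≠ j → |M i j| ≤ (s:ℝ)/p := by
      intro i j hij
      set b : Fin s → ℤ := fun m => ((emb i m : ℕ) : ℤ) - ((emb j m : ℕ) : ℤ) with hb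
      have hbne : ∃ m, ¬ ((p:ℤ) ∣ b m) := by
        have hne : emb i ≠ emb j := fun h => hij (emb.injective h)
        obtain ⟨m, hm⟩ := Function.ne_iff.mp hne
        refine ⟨m, ?_⟩
        intro hdvd
        have h1 : b m ≠ 0 := by
          intro h
          apply hm
          have h' : ((emb i m : ℕ) : ℤ) - ((emb j m : ℕ) : ℤ) = 0 := by
            rw [hb] at h
            exact h
          have h'' : (emb i m : ℕ) = (emb j m : ℕ) := by omega
          exact Fin.val_injective h''
        have h2 : |b m| < p := by
          have hv1 : (emb i m : ℕ) < p := (emb i m).isLt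
          have hv2 : (emb j m : ℕ) < p := (emb j m).isLt
          have hbm : b m = ((emb i m : ℕ) : ℤ) - ((emb j m : ℕ) : ℤ) := by rw [hb]
          rw [hbm, abs_lt]
          omega
        have h4 : (p:ℤ) ≤ |b m| := Int.le_of_dvd (abs_pos.mpr h1) ((dvd_abs _ _).mpr hdvd)
        exact absurd h4 (not_le.mpr h2)
      have hsum := expsum p s hp hsp b hbne
      -- connect cos sum with chr sum
      have hcos : ∀ x : ℕ, Real.cos (θ i x - θ j x)
          = (chr p (∑ m : Fin s, b m * (x:ℤ)^(m.1+1))).re := by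
        intro x
        have harg : chr p (∑ m : Fin s, b m * (x:ℤ)^(m.1+1))
            = Complex.exp (((2 * Real.pi * (∑ m : Fin s, b m * (x:ℤ)^(m.1+1)) / (p:ℝ)^2 : ℝ) : ℂ)
                * Complex.I) := by
          rw [chr]
          congr 1
          push_cast
          ring
        rw [harg, Complex.exp_ofReal_mul_I_re]
        congr 1
        rw [hθ, hg, hb]
        push_cast
        rw [div_sub_div_same]
        congr 1
        rw [← mul_sub, ← Finset.sum_sub_distrib]
        congr 1
        refine Finset.sum_congr rfl fun m _ => ?_
        ring
      rw [hgram i j]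
      rw [Finset.sum_congr rfl (fun x _ => hcos x)]
      rw [← Complex.re_sum]
      rw [abs_mul]
      have h1 : |(1/(p:ℝ)^2)| = 1/(p:ℝ)^2 := abs_of_pos (by positivity)
      rw [h1]
      have h2 := Complex.abs_re_le_norm (∑ x ∈ Finset.range (p^2),
        chr p (∑ m : Fin s, b m * (x:ℤ)^(m.1+1)))
      have h3 : |(∑ x ∈ Finset.range (p^2),
          chr p (∑ m : Fin s, b m * (x:ℤ)^(m.1+1))).re| ≤ (s:ℝ)*p := le_trans h2 hsum
      calc 1/(p:ℝ)^2 * |(∑ x ∈ Finset.range (p^2),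
            chr p (∑ m : Fin s, b m * (x:ℤ)^(m.1+1))).re|
          ≤ 1/(p:ℝ)^2 * ((s:ℝ)*p) := by
            exact mul_le_mul_of_nonneg_left h3 (by positivity)
        _ = (s:ℝ)/p := by field_simp
    -- operator bound
    intro x i
    have hmv : M.mulVecLin x i = ∑ j, M i j * x j := by
      simp [Matrix.mulVecLin, Matrix.mulVec, dotProduct]
    rw [hmv]
    have hxi : x i = ∑ j, (if i = j then (1:ℝ) else 0) * x j := by
      simp [ite_mul]
    rw [hxi, ← Finset.sum_sub_distrib]
    have hterm : ∀ j, (if i = j then (1:ℝ) else 0) * x j - M i j * x j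
        = ((if i = j then (1:ℝ) else 0) - M i j) * x j := fun j => by ring
    rw [Finset.sum_congr rfl (fun j _ => hterm j)]
    have hcoef : ∀ j, |(if i = j then (1:ℝ) else 0) - M i j| ≤ (s:ℝ)/p := by
      intro j
      by_cases h : i = j
      · subst h
        rw [if_pos rfl, hdiag i, sub_self, abs_zero]
        positivity
      · rw [if_neg h, zero_sub, abs_neg]
        exact hoff i j h
    calc |∑ j, ((if i = j then (1:ℝ) else 0) - M i j) * x j|
        ≤ ∑ j, |((if i = j then (1:ℝ) else 0) - M i j) * x j| :=
          Finset.abs_sum_le_sum_abs _ _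
      _ ≤ ∑ j, ((s:ℝ)/p) * |x j| := by
          refine Finset.sum_le_sum fun j _ => ?_
          rw [abs_mul]
          exact mul_le_mul_of_nonneg_right (hcoef j) (abs_nonneg _)
      _ = ((s:ℝ)/p) * ∑ j, |x j| := by rw [Finset.mul_sum]

lemma lpnorm_inf_def {N : ℕ} (y : Fin N → ℝ) : lpnorm ∞ y = ⨆ i, |y i| := by
  rw [lpnorm, if_pos rfl]

lemma lpnorm_inf_nonneg {N : ℕ} (y : Fin N → ℝ) : 0 ≤ lpnorm ∞ y := by
  rw [lpnorm_inf_def]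
  exact Real.iSup_nonneg fun i => abs_nonneg _

lemma lpnorm_inf_zero {N : ℕ} : lpnorm ∞ (0 : Fin N → ℝ) = 0 := by
  refine le_antisymm ?_ (lpnorm_inf_nonneg _)
  rw [lpnorm_inf_def]
  exact Real.iSup_le (fun i => by simp) le_rfl

lemma lpnorm_zero {p : ℝ≥0∞} {N : ℕ} (hp : p ≠ ∞) (hρ : p.toReal ≠ 0) :
    lpnorm p (0 : Fin N → ℝ) = 0 := by
  rw [lpnorm, if_neg hp]
  have : ∀ i : Fin N, |(0 : Fin N → ℝ) i| ^ p.toReal = 0 := by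
    intro i
    simp [Real.zero_rpow hρ]
  rw [Finset.sum_congr rfl (fun i _ => this i), Finset.sum_const_zero]
  exact Real.zero_rpow (by simp [hρ])

lemma approxNumId_nonneg (p : ℝ≥0∞) (N k : ℕ) : 0 ≤ approxNumId p ∞ N k := by
  apply Real.sInf_nonneg
  rintro r ⟨A, -, rfl⟩
  apply Real.sSup_nonneg
  rintro c ⟨x, -, rfl⟩
  exact lpnorm_inf_nonneg _

lemma approxNumId_le (p : ℝ≥0∞) (N k : ℕ) (B : ℝ) (hB : 0 ≤ B)
    (A : (Fin N → ℝ) →ₗ[ℝ] (Fin N → ℝ))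
    (hA : Module.rank ℝ (LinearMap.range A) < k)
    (hbd : ∀ x : Fin N → ℝ, lpnorm p x ≤ 1 → lpnorm ∞ (x - A x) ≤ B) :
    approxNumId p ∞ N k ≤ B := by
  rw [approxNumId]
  have hbdd : BddBelow {r : ℝ | ∃ A : (Fin N → ℝ) →ₗ[ℝ] (Fin N → ℝ),
      Module.rank ℝ (LinearMap.range A) < k ∧
      r = sSup {c : ℝ | ∃ x : Fin N → ℝ, lpnorm p x ≤ 1 ∧ c = lpnorm ∞ (x - A x)}} := by
    refine ⟨0, ?_⟩
    rintro r ⟨A', -, rfl⟩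
    apply Real.sSup_nonneg
    rintro c ⟨x, -, rfl⟩
    exact lpnorm_inf_nonneg _
  refine le_trans (csInf_le hbdd ⟨A, hA, rfl⟩) ?_
  apply Real.sSup_le _ hB
  rintro c ⟨x, hx, rfl⟩
  exact hbd x hx

-- sum bound lemmas
lemma sum_rpow_le_rpow_sum {ι : Type*} (F : Finset ι) (f : ι → ℝ≥0) {q : ℝ} (hq : 1 ≤ q) :
    ∑ i ∈ F, (f i) ^ q ≤ (∑ i ∈ F, f i) ^ q := by
  classical
  induction F using Finset.induction_on with
  | empty => simp [NNReal.zero_rpow (by linarith : q ≠ 0)]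
  | insert _ _ hnotmem ih =>
      rename_i a F'
      rw [Finset.sum_insert hnotmem, Finset.sum_insert hnotmem]
      calc (f a) ^ q + ∑ i ∈ F', (f i) ^ q ≤ (f a) ^ q + (∑ i ∈ F', f i) ^ q := by
            exact add_le_add_right ih _
        _ ≤ (f a + ∑ i ∈ F', f i) ^ q := NNReal.add_rpow_le_rpow_add _ _ hq

lemma abs_le_one_of_lpnorm {p : ℝ≥0∞} {N : ℕ} (hp : p ≠ ∞) (hρ : 0 < p.toReal)
    (x : Fin N → ℝ) (hx : lpnorm p x ≤ 1) (i : Fin N) : |x i| ≤ 1 := by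
  rw [lpnorm, if_neg hp] at hx
  set S := ∑ i, |x i| ^ p.toReal with hS
  have hS0 : 0 ≤ S := Finset.sum_nonneg fun i _ => Real.rpow_nonneg (abs_nonneg _) _
  have hS1 : S ≤ 1 := by
    have h1 : (S ^ (1 / p.toReal)) ^ p.toReal ≤ 1 ^ p.toReal :=
      Real.rpow_le_rpow (Real.rpow_nonneg hS0 _) hx hρ.le
    rw [Real.one_rpow, ← Real.rpow_mul hS0, one_div_mul_cancel hρ.ne', Real.rpow_one] at h1
    exact h1
  have hterm : |x i| ^ p.toReal ≤ S := by
    rw [hS]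
    exact Finset.single_le_sum (fun j _ => Real.rpow_nonneg (abs_nonneg _) _) (Finset.mem_univ i)
  by_contra hgt
  push_neg at hgt
  have : 1 < |x i| ^ p.toReal :=
    (Real.one_lt_rpow_iff_of_pos (lt_trans one_pos hgt)).mpr (Or.inl ⟨hgt, hρ⟩)
  linarith

lemma lpnorm_inf_le_one {p : ℝ≥0∞} {N : ℕ} (hp : p ≠ ∞) (hρ : 0 < p.toReal)
    (x : Fin N → ℝ) (hx : lpnorm p x ≤ 1) : lpnorm ∞ x ≤ 1 := by
  rw [lpnorm_inf_def]
  exact Real.iSup_le (fun i => abs_le_one_of_lpnorm hp hρ x hx i) zero_le_one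

lemma sum_abs_le_one_of_lpnorm {p : ℝ≥0∞} {N : ℕ} (hp : p ≠ ∞) (hρ0 : 0 < p.toReal)
    (hρ1 : p.toReal ≤ 1) (x : Fin N → ℝ) (hx : lpnorm p x ≤ 1) : ∑ i, |x i| ≤ 1 := by
  rw [lpnorm, if_neg hp] at hx
  set ρ := p.toReal with hρ
  -- NNReal versions
  set f : Fin N → ℝ≥0 := fun i => Real.nnabs (x i) with hf
  have key : (∑ i, f i : ℝ≥0) ≤ (∑ i, (f i) ^ ρ) ^ (1/ρ) := by
    have h2 : ∀ i : Fin N, f i = ((f i) ^ ρ) ^ (1/ρ) := by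
      intro i
      rw [← NNReal.rpow_mul, mul_one_div_cancel hρ0.ne', NNReal.rpow_one]
    calc (∑ i, f i : ℝ≥0) = ∑ i, ((f i) ^ ρ) ^ (1/ρ) := by
          rw [Finset.sum_congr rfl (fun i _ => h2 i)]
      _ ≤ (∑ i, (f i) ^ ρ) ^ (1/ρ) := by
          apply sum_rpow_le_rpow_sum
          rw [le_div_iff₀ hρ0, one_mul]
          exact hρ1
  have hreal : (∑ i, |x i|) ≤ ((∑ i, |x i| ^ ρ) ^ (1/ρ) : ℝ) := by
    have h1 : ((∑ i, f i : ℝ≥0) : ℝ) = ∑ i, |x i| := by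
      push_cast
      refine Finset.sum_congr rfl fun i _ => ?_
      simp [hf]
    have h2 : (((∑ i, (f i) ^ ρ) ^ (1/ρ) : ℝ≥0) : ℝ) = (∑ i, |x i| ^ ρ) ^ (1/ρ) := by
      push_cast [NNReal.coe_rpow]
      simp [hf]
    rw [← h1, ← h2]
    exact_mod_cast key
  exact le_trans hreal hx

end Aux


set_option maxHeartbeats 2000000 in
/-- Let `0 < p ≤ 1` and `0 < λ < 1`. Then there is a constant `C_λ > 0` depending
only on `λ` (and `p`) such that `a_k(id : ℓ_p^N → ℓ_∞^N) ≤ 1` if `k ≤ N^λ`,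
`a_k ≤ C_λ k^{-1/2}` if `N^λ < k ≤ N`, and `a_k = 0` if `k > N`. -/
theorem approx_number_id_finite_lp_infty_upper
    (p : ℝ≥0∞) (h₀ : 0 < p) (h₁ : p ≤ 1) (lam : ℝ) (hl₀ : 0 < lam) (hl₁ : lam < 1) :
    ∃ C : ℝ, 0 < C ∧ ∀ N k : ℕ, 1 ≤ k →
      ((k : ℝ) ≤ (N : ℝ) ^ lam → approxNumId p ∞ N k ≤ 1) ∧
      ((N : ℝ) ^ lam < (k : ℝ) → k ≤ N →
        approxNumId p ∞ N k ≤ C * (k : ℝ) ^ (-(1/2) : ℝ)) ∧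
      (N < k → approxNumId p ∞ N k = 0) := by
  have hpinf : p ≠ ∞ := by
    intro h
    rw [h] at h₁
    exact (by simp : ¬ (∞ : ℝ≥0∞) ≤ 1) h₁
  have hρ0 : 0 < p.toReal := ENNReal.toReal_pos h₀.ne' hpinf
  have hρ1 : p.toReal ≤ 1 := by
    have := ENNReal.toReal_mono (by simp) h₁
    simpa using this
  set s : ℕ := ⌈2/lam⌉₊ + 2 with hs
  have hs_ge : (2:ℝ)/lam + 2 ≤ (s:ℝ) := by
    have := Nat.le_ceil (2/lam)
    push_cast [hs]
    linarith
  have hs1 : 1 ≤ s := by omega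
  set k₀ : ℕ := max (8*(s+1)^2 + 1) (8^s) with hk₀
  have hk₀1 : 1 ≤ k₀ := by
    have : 1 ≤ 8*(s+1)^2 + 1 := Nat.succ_le_succ (Nat.zero_le _)
    omega
  set C : ℝ := (k₀ : ℝ) + 3*(s:ℝ) + 1 with hC
  have hCpos : 0 < C := by positivity
  refine ⟨C, hCpos, ?_⟩
  intro N k hk1
  have hk0R : (0:ℝ) < k := by exact_mod_cast hk1
  refine ⟨?_, ?_, ?_⟩
  · -- case k ≤ N^lam : bound 1 with A = 0
    intro _
    refine approxNumId_le p N k 1 zero_le_one 0 ?_ ?_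
    · rw [LinearMap.range_zero, rank_bot]
      have h00 : ((0:ℕ) : Cardinal.{0}) < ((k:ℕ) : Cardinal.{0}) := Nat.cast_lt.mpr hk1
      simpa using h00
    · intro x hx
      rw [LinearMap.zero_apply, sub_zero]
      exact lpnorm_inf_le_one hpinf hρ0 x hx
  · -- middle case
    intro hNk hkN
    have hBnonneg : 0 ≤ C * (k:ℝ) ^ (-(1/2) : ℝ) :=
      mul_nonneg hCpos.le (Real.rpow_nonneg hk0R.le _)
    by_cases hsmall : k < k₀
    · -- small k: use A = 0, bound 1 ≤ C k^{-1/2}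
      have h1le : (1:ℝ) ≤ C * (k:ℝ) ^ (-(1/2) : ℝ) := by
        rw [Real.rpow_neg hk0R.le, ← Real.sqrt_eq_rpow]
        have hsqrtpos : (0:ℝ) < Real.sqrt k := Real.sqrt_pos.mpr hk0R
        have hsq : Real.sqrt k ≤ C := by
          have h1 : Real.sqrt k ≤ (k:ℝ) := by
            have h1k : (1:ℝ) ≤ (k:ℝ) := by exact_mod_cast hk1
            nlinarith [Real.sq_sqrt hk0R.le, Real.sqrt_nonneg (k:ℝ)]
          have h2 : (k:ℝ) ≤ (k₀:ℝ) := by exact_mod_cast hsmall.le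
          have h3 : (0:ℝ) ≤ (s:ℝ) := Nat.cast_nonneg _
          rw [hC]
          linarith
        calc (1:ℝ) = Real.sqrt k * (Real.sqrt k)⁻¹ := (mul_inv_cancel₀ hsqrtpos.ne').symm
          _ ≤ C * (Real.sqrt k)⁻¹ :=
              mul_le_mul_of_nonneg_right hsq (inv_nonneg.mpr hsqrtpos.le)
      refine approxNumId_le p N k _ hBnonneg 0 ?_ ?_
      · rw [LinearMap.range_zero, rank_bot]
        have h00 : ((0:ℕ) : Cardinal.{0}) < ((k:ℕ) : Cardinal.{0}) := Nat.cast_lt.mpr hk1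
        simpa using h00
      · intro x hx
        rw [LinearMap.zero_apply, sub_zero]
        exact le_trans (lpnorm_inf_le_one hpinf hρ0 x hx) h1le
    · -- large k: the real construction
      push_neg at hsmall
      set n : ℕ := Nat.sqrt ((k-1)/8) with hn
      have hksplit1 : 8*(s+1)^2 + 1 ≤ k := le_trans (le_max_left _ _) hsmall
      have hksplit2 : 8^s ≤ k := le_trans (le_max_right _ _) hsmall
      have hn_ge : s + 1 ≤ n := by
        have h1 : (s+1)^2 ≤ (k-1)/8 := by
          have : 8*(s+1)^2 ≤ k - 1 := by omega
          omega
        calc s + 1 = Nat.sqrt ((s+1)^2) := (Nat.sqrt_eq' (s+1)).symm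
          _ ≤ n := Nat.sqrt_le_sqrt h1
      obtain ⟨q, hq, hnq, hq2n⟩ := Nat.exists_prime_lt_and_le_two_mul n (by omega)
      have hsq : s < q := by omega
      -- 2 q^2 < k
      have hq2k : 2*q^2 < k := by
        have h1 : q*q ≤ (2*n)*(2*n) := Nat.mul_le_mul hq2n hq2n
        have h2 : n*n ≤ (k-1)/8 := by
          rw [hn, ← pow_two]
          exact Nat.sqrt_le' _
        have h3 : 8*((k-1)/8) ≤ k-1 := by omega
        have : 2*(q*q) ≤ 8*(n*n) := by nlinarith
        have h4 : 8*(n*n) ≤ k - 1 := le_trans (by nlinarith) h3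
        have : 2*(q*q) ≤ k - 1 := le_trans this h4
        have hq2 : q^2 = q*q := sq q
        omega
      -- k ≤ 8 q^2
      have hk8q : k ≤ 8*q^2 := by
        have h1 : (k-1)/8 < (n+1)*(n+1) := Nat.lt_succ_sqrt ((k-1)/8)
        have h2 : k - 1 < ((n+1)*(n+1))*8 := (Nat.div_lt_iff_lt_mul (by norm_num)).mp h1
        have h3 : (n+1) ≤ q := hnq
        have h4 : (n+1)*(n+1) ≤ q*q := Nat.mul_le_mul h3 h3
        have hq2 : q^2 = q*q := sq q
        omega
      -- N ≤ q^s via reals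
      have hNq : N ≤ q^s := by
        have hNlt : (N:ℝ) < (k:ℝ) ^ (1/lam) := by
          have hbase : (N:ℝ) = ((N:ℝ)^lam)^(1/lam) := by
            rw [← Real.rpow_mul (Nat.cast_nonneg N), mul_one_div_cancel hl₀.ne', Real.rpow_one]
          rw [hbase]
          exact Real.rpow_lt_rpow (Real.rpow_nonneg (Nat.cast_nonneg N) _) hNk
            (by positivity)
        have hqk : (k:ℝ) ^ (1/lam) ≤ (q:ℝ)^(s:ℕ) := by
          have hr1 : (1:ℝ) ≤ (k:ℝ) := by exact_mod_cast hk1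
          have hr8 : (8:ℝ)^(s:ℕ) ≤ (k:ℝ) := by exact_mod_cast hksplit2
          have hq0 : (0:ℝ) < q := by exact_mod_cast hq.pos
          have hQ : (k:ℝ)/8 ≤ ((q:ℝ))^2 := by
            rw [div_le_iff₀ (by norm_num : (0:ℝ) < 8)]
            calc (k:ℝ) ≤ ((8*q^2 : ℕ):ℝ) := by exact_mod_cast hk8q
              _ = (q:ℝ)^2 * 8 := by push_cast; ring
          -- (q:ℝ)^s = ((q:ℝ)^2)^(s/2) as rpow
          have e1 : (q:ℝ)^(s:ℕ) = ((q:ℝ)^2) ^ ((s:ℝ)/2) := by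
            rw [← Real.rpow_natCast (q:ℝ) s, ← Real.rpow_natCast (q:ℝ) 2,
              ← Real.rpow_mul hq0.le]
            congr 1
            ring
          have step1 : (k:ℝ) ^ (1/lam) ≤ (k:ℝ) ^ ((s:ℝ)/2 - 1) := by
            apply Real.rpow_le_rpow_of_exponent_le hr1
            have h3 : (2:ℝ)/lam = 2*(1/lam) := by ring
            linarith [h3]
          have step2 : (k:ℝ) ^ ((s:ℝ)/2 - 1) ≤ ((k:ℝ)/8) ^ ((s:ℝ)/2) := by
            have h80 : (0:ℝ) < 8 := by norm_num
            rw [Real.div_rpow (by linarith) h80.le]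
            rw [le_div_iff₀ (by positivity : (0:ℝ) < (8:ℝ)^((s:ℝ)/2))]
            have h85 : (8:ℝ)^((s:ℝ)/2) ≤ (8:ℝ)^((s:ℝ)) := by
              apply Real.rpow_le_rpow_of_exponent_le (by norm_num)
              linarith [Nat.cast_nonneg (α := ℝ) s]
            have h86 : (8:ℝ)^((s:ℝ)) = (8:ℝ)^(s:ℕ) := by
              rw [Real.rpow_natCast]
            have h87 : (8:ℝ)^((s:ℝ)/2) ≤ (k:ℝ) := by
              rw [h86] at h85
              linarith
            calc (k:ℝ) ^ ((s:ℝ)/2 - 1) * (8:ℝ)^((s:ℝ)/2)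
                ≤ (k:ℝ) ^ ((s:ℝ)/2 - 1) * (k:ℝ) := by
                  apply mul_le_mul_of_nonneg_left h87 (Real.rpow_nonneg (by linarith) _)
              _ = (k:ℝ) ^ ((s:ℝ)/2) := by
                  rw [← Real.rpow_add_one (by linarith : (k:ℝ) ≠ 0)]
                  congr 1
                  ring
          have step3 : ((k:ℝ)/8) ^ ((s:ℝ)/2) ≤ ((q:ℝ)^2) ^ ((s:ℝ)/2) := by
            apply Real.rpow_le_rpow (by linarith) hQ (by positivity)
          rw [e1]
          exact le_trans step1 (le_trans step2 step3)
        have : (N:ℝ) < ((q^s : ℕ) : ℝ) := by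
          push_cast
          exact lt_of_lt_of_le hNlt hqk
        exact_mod_cast this.le
      obtain ⟨A, hrank, hbound⟩ := key_matrix q s N hq hsq hNq
      refine approxNumId_le p N k _ hBnonneg A ?_ ?_
      · refine lt_of_le_of_lt hrank ?_
        exact Nat.cast_lt.mpr (by omega : 2*q^2 < k)
      · intro x hx
        rw [lpnorm_inf_def]
        have hxsum : ∑ j, |x j| ≤ 1 := sum_abs_le_one_of_lpnorm hpinf hρ0 hρ1 x hx
        have hquot : (s:ℝ)/q ≤ C * (k:ℝ) ^ (-(1/2) : ℝ) := by
          have hq0 : (0:ℝ) < q := by exact_mod_cast hq.pos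
          have hsqk : Real.sqrt k ≤ 3*(q:ℝ) := by
            have h1 : (k:ℝ) ≤ 9*(q:ℝ)^2 := by
              have : (k:ℝ) ≤ ((8*q^2 : ℕ):ℝ) := by exact_mod_cast hk8q
              push_cast at this
              nlinarith
            calc Real.sqrt k ≤ Real.sqrt (9*(q:ℝ)^2) := Real.sqrt_le_sqrt h1
              _ = 3*(q:ℝ) := by
                  rw [show (9:ℝ)*(q:ℝ)^2 = (3*(q:ℝ))^2 by ring]
                  exact Real.sqrt_sq (by positivity)
          rw [Real.rpow_neg hk0R.le, ← Real.sqrt_eq_rpow]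
          rw [div_le_iff₀ hq0, mul_assoc]
          have hC3 : 3*(s:ℝ) ≤ C := by
            rw [hC]
            have : (0:ℝ) ≤ (k₀:ℝ) := Nat.cast_nonneg _
            linarith
          have hsqrtpos : (0:ℝ) < Real.sqrt k := Real.sqrt_pos.mpr hk0R
          calc (s:ℝ) = (s:ℝ) * (Real.sqrt k * (Real.sqrt k)⁻¹) := by field_simp
            _ = ((s:ℝ) * Real.sqrt k) * (Real.sqrt k)⁻¹ := by ring
            _ ≤ ((s:ℝ) * (3*(q:ℝ))) * (Real.sqrt k)⁻¹ := by
                apply mul_le_mul_of_nonneg_right _ (by positivity)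
                exact mul_le_mul_of_nonneg_left hsqk (Nat.cast_nonneg _)
            _ = (3*(s:ℝ)) * ((Real.sqrt k)⁻¹ * q) := by ring
            _ ≤ C * ((Real.sqrt k)⁻¹ * q) := by
                apply mul_le_mul_of_nonneg_right hC3
                positivity
        apply Real.iSup_le _ hBnonneg
        intro i
        have h1 : |(x - A x) i| = |x i - A x i| := by simp
        rw [h1]
        calc |x i - A x i| ≤ ((s:ℝ)/q) * ∑ j, |x j| := hbound x i
          _ ≤ ((s:ℝ)/q) * 1 := by
              apply mul_le_mul_of_nonneg_left hxsum
              positivity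
          _ = (s:ℝ)/q := mul_one _
          _ ≤ C * (k:ℝ) ^ (-(1/2) : ℝ) := hquot
  · -- k > N : value 0
    intro hNltk
    refine le_antisymm ?_ (approxNumId_nonneg p N k)
    refine approxNumId_le p N k 0 le_rfl LinearMap.id ?_ ?_
    · rw [LinearMap.range_id, rank_top, rank_fin_fun]
      exact_mod_cast Nat.cast_lt.mpr hNltk
    · intro x _
      rw [LinearMap.id_apply, sub_self, lpnorm_inf_zero]
end

section
/- Let 0 < p ≤ 1. Then there exists a constant C > 0, independent of k, such that for all k ∈ ℕ with k ≥ 1, a_k(id : ℓ_p^{2k} → ℓ_∞^{2k}) ≥ C · k^{−1/2}. -/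
open scoped ENNReal
open Finset

private lemma trace_le_sqrt_rank' {N : ℕ} (A : (Fin N → ℝ) →ₗ[ℝ] (Fin N → ℝ)) (r : ℕ)
    (hr : Module.finrank ℝ (LinearMap.range A) ≤ r) :
    ∑ i, A (Pi.single i 1) i ≤
      Real.sqrt r * Real.sqrt (∑ i, ∑ j, (A (Pi.single i 1) j) ^ 2) := by
  classical
  let E := EuclideanSpace ℝ (Fin N)
  let φ : (Fin N → ℝ) ≃ₗ[ℝ] E := (WithLp.linearEquiv 2 ℝ (Fin N → ℝ)).symm
  let A' : E →ₗ[ℝ] E := (φ.toLinearMap.comp A).comp φ.symm.toLinearMap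
  let V : Submodule ℝ E := LinearMap.range A'
  have hVr : Module.finrank ℝ V ≤ r := by
    have hV : V = (LinearMap.range A).map φ.toLinearMap := by
      show LinearMap.range A' = _
      show LinearMap.range ((φ.toLinearMap.comp A).comp φ.symm.toLinearMap) = _
      rw [LinearMap.range_comp, LinearEquiv.range, Submodule.map_top, LinearMap.range_comp]
    rw [hV, LinearEquiv.finrank_map_eq]
    exact hr
  set s := Module.finrank ℝ V with hs
  let b : OrthonormalBasis (Fin s) ℝ V := stdOrthonormalBasis ℝ V
  let v : Fin s → E := fun j => (b j : E)
  have hv : Orthonormal ℝ v := b.orthonormal.comp_linearIsometry V.subtypeₗᵢ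
  let col : Fin N → E := fun i => A' (φ (Pi.single i 1))
  have hcol_mem : ∀ i, col i ∈ V := fun i => LinearMap.mem_range_self _ _
  have hcol_apply : ∀ i j, col i j = A (Pi.single i 1) j := fun i j => by
    show (φ (A (φ.symm (φ (Pi.single i 1))))) j = _
    rw [LinearEquiv.symm_apply_apply]
    rfl
  have hexp : ∀ i, col i = ∑ j, (inner ℝ (v j) (col i) : ℝ) • v j := by
    intro i
    have h := b.sum_repr' ⟨col i, hcol_mem i⟩
    have hc := congrArg (V.subtype) h
    rw [map_sum] at hc
    simp only [Submodule.coe_subtype, Submodule.coe_smul] at hc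
    simp only [Submodule.coe_inner] at hc
    exact hc.symm
  have htr : ∑ i, A (Pi.single i 1) i = ∑ i, ∑ j, (inner ℝ (v j) (col i) : ℝ) * v j i := by
    refine Finset.sum_congr rfl fun i _ => ?_
    rw [← hcol_apply i i]
    conv_lhs => rw [hexp i]
    have hsa : ((∑ j, (inner ℝ (v j) (col i) : ℝ) • v j : E) i)
        = ∑ j, ((inner ℝ (v j) (col i) : ℝ) • v j : E) i := by
      rw [WithLp.ofLp_sum]; exact Finset.sum_apply i _ _
    rw [hsa]
    rfl
  have hCS : ∑ i, ∑ j, (inner ℝ (v j) (col i) : ℝ) * v j i ≤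
      Real.sqrt (∑ i, ∑ j, (inner ℝ (v j) (col i) : ℝ) ^ 2) *
      Real.sqrt (∑ i, ∑ j, (v j i) ^ 2) := by
    rw [← Fintype.sum_prod_type (f := fun q : Fin N × Fin s => (inner ℝ (v q.2) (col q.1) : ℝ) * v q.2 q.1),
      ← Fintype.sum_prod_type (f := fun q : Fin N × Fin s => (inner ℝ (v q.2) (col q.1) : ℝ) ^ 2),
      ← Fintype.sum_prod_type (f := fun q : Fin N × Fin s => (v q.2 q.1) ^ 2)]
    exact Real.sum_mul_le_sqrt_mul_sqrt _ _ _
  have h1 : ∑ i, ∑ j, (inner ℝ (v j) (col i) : ℝ) ^ 2 ≤ ∑ i, ∑ j, (A (Pi.single i 1) j) ^ 2 := by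
    refine Finset.sum_le_sum fun i _ => ?_
    have h := hv.sum_inner_products_le (s := Finset.univ) (col i)
    calc ∑ j, (inner ℝ (v j) (col i) : ℝ) ^ 2
        = ∑ j, ‖(inner ℝ (v j) (col i) : ℝ)‖ ^ 2 := by
          simp [Real.norm_eq_abs, sq_abs]
      _ ≤ ‖col i‖ ^ 2 := h
      _ = ∑ j, (A (Pi.single i 1) j) ^ 2 := by
          rw [EuclideanSpace.norm_eq, Real.sq_sqrt (Finset.sum_nonneg fun j _ => sq_nonneg _)]
          exact Finset.sum_congr rfl fun j _ => by
            rw [Real.norm_eq_abs, sq_abs, hcol_apply]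
  have h2 : ∑ i, ∑ j, (v j i) ^ 2 = (s : ℝ) := by
    rw [Finset.sum_comm]
    have hone : ∀ j, ∑ i, (v j i) ^ 2 = 1 := by
      intro j
      have hn : ‖v j‖ = 1 := hv.1 j
      have hsq := congrArg (fun x : ℝ => x ^ 2) (EuclideanSpace.norm_eq (v j))
      simp only [hn, one_pow] at hsq
      rw [Real.sq_sqrt (Finset.sum_nonneg fun i _ => sq_nonneg _)] at hsq
      simp only [Real.norm_eq_abs, sq_abs] at hsq
      exact hsq.symm
    simp [hone]
  calc ∑ i, A (Pi.single i 1) i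
      = ∑ i, ∑ j, (inner ℝ (v j) (col i) : ℝ) * v j i := htr
    _ ≤ Real.sqrt (∑ i, ∑ j, (inner ℝ (v j) (col i) : ℝ) ^ 2) *
        Real.sqrt (∑ i, ∑ j, (v j i) ^ 2) := hCS
    _ ≤ Real.sqrt (∑ i, ∑ j, (A (Pi.single i 1) j) ^ 2) * Real.sqrt r := by
        refine mul_le_mul (Real.sqrt_le_sqrt h1) ?_ (Real.sqrt_nonneg _) (Real.sqrt_nonneg _)
        rw [h2]
        exact Real.sqrt_le_sqrt (by exact_mod_cast hVr)
    _ = Real.sqrt r * Real.sqrt (∑ i, ∑ j, (A (Pi.single i 1) j) ^ 2) := mul_comm _ _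

set_option maxHeartbeats 1000000 in
/-- Let `0 < p ≤ 1`. Then there is a constant `C > 0`, independent of `k`, such that
`a_k(id : ℓ_p^{2k} → ℓ_∞^{2k}) ≥ C k^{-1/2}` for all `k ≥ 1`. -/
theorem approx_number_id_finite_lp_infty_lower
    (p : ℝ≥0∞) (h₀ : 0 < p) (h₁ : p ≤ 1) :
    ∃ C : ℝ, 0 < C ∧ ∀ k : ℕ, 1 ≤ k →
      C * (k : ℝ) ^ (-(1/2) : ℝ) ≤ approxNumId p ∞ (2 * k) k := by
  classical
  have hs2sq : Real.sqrt 2 * Real.sqrt 2 = 2 := Real.mul_self_sqrt (by norm_num)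
  have hs2 : Real.sqrt 2 < 2 := by nlinarith [Real.sqrt_nonneg 2]
  have hs2nn : 0 ≤ Real.sqrt 2 := Real.sqrt_nonneg 2
  refine ⟨(2 - Real.sqrt 2) / 6, by nlinarith, ?_⟩
  intro k hk
  have hp_top : p ≠ ∞ := (h₁.trans_lt ENNReal.one_lt_top).ne
  have ht : 0 < p.toReal := ENNReal.toReal_pos h₀.ne' hp_top
  set t := p.toReal with htdef
  have hN : 0 < 2 * k := by omega
  haveI hFinNe : Nonempty (Fin (2 * k)) := Fin.pos_iff_nonempty.mp hN
  set n := 2 * k with hn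
  -- basic facts about square roots
  set sk := Real.sqrt k with hskdef
  have hskk : sk * sk = (k : ℝ) := Real.mul_self_sqrt (by positivity)
  have hsk1 : 1 ≤ sk := by
    rw [hskdef, show (1:ℝ) = Real.sqrt 1 by simp]
    exact Real.sqrt_le_sqrt (by exact_mod_cast hk)
  have hsk0 : 0 < sk := lt_of_lt_of_le one_pos hsk1
  have hk1 : (1:ℝ) ≤ (k:ℝ) := by exact_mod_cast hk
  apply le_csInf
  · refine ⟨_, 0, ?_, rfl⟩
    have h0 : LinearMap.range (0 : (Fin n → ℝ) →ₗ[ℝ] (Fin n → ℝ)) = ⊥ :=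
      LinearMap.range_zero
    rw [h0, rank_bot]
    exact_mod_cast hk
  · rintro r ⟨A, hrank, rfl⟩
    -- the rank bound
    have hfr : Module.finrank ℝ (LinearMap.range A) ≤ k := by
      have h1 : (Module.finrank ℝ (LinearMap.range A) : Cardinal) =
          Module.rank ℝ (LinearMap.range A) := Module.finrank_eq_rank ℝ _
      rw [← h1] at hrank
      have : Module.finrank ℝ (LinearMap.range A) < k := by exact_mod_cast hrank
      exact this.le
    -- the max entry of I - A
    set g : Fin n × Fin n → ℝ :=
      fun q => |(Pi.single q.2 1 : Fin n → ℝ) q.1 - A (Pi.single q.2 1) q.1| with hg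
    obtain ⟨q₀, -, hq₀⟩ := Finset.exists_mem_eq_sup' Finset.univ_nonempty g
    set m := Finset.univ.sup' Finset.univ_nonempty g with hm
    have hm_entry : ∀ q, g q ≤ m := fun q => Finset.le_sup' g (Finset.mem_univ q)
    have hm0 : 0 ≤ m := hq₀ ▸ abs_nonneg _
    -- diagonal and off-diagonal bounds
    have hdiag : ∀ i : Fin n, |1 - A (Pi.single i 1) i| ≤ m := by
      intro i
      have h := hm_entry (i, i)
      simpa [hg, Pi.single_eq_same] using h
    have hoff : ∀ i j : Fin n, j ≠ i → |A (Pi.single i 1) j| ≤ m := by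
      intro i j hij
      have h := hm_entry (j, i)
      simp only [hg] at h
      rwa [Pi.single_eq_of_ne hij, zero_sub, abs_neg] at h
    -- trace lower bound
    have htrace_lb : (n : ℝ) * (1 - m) ≤ ∑ i, A (Pi.single i 1) i := by
      calc (n : ℝ) * (1 - m) = ∑ _i : Fin n, (1 - m) := by
            rw [Finset.sum_const, Finset.card_univ, Fintype.card_fin, nsmul_eq_mul]
        _ ≤ ∑ i, A (Pi.single i 1) i := by
            refine Finset.sum_le_sum fun i _ => ?_
            have := abs_le.mp (hdiag i)
            linarith [this.2]
    -- Frobenius bound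
    have hG : ∑ i, ∑ j, (A (Pi.single i 1) j) ^ 2 ≤
        (n : ℝ) * ((1 + m) ^ 2 + (n : ℝ) * m ^ 2) := by
      have hrow : ∀ i : Fin n, ∑ j, (A (Pi.single i 1) j) ^ 2 ≤
          (1 + m) ^ 2 + (n : ℝ) * m ^ 2 := by
        intro i
        rw [← Finset.add_sum_erase _ _ (Finset.mem_univ i)]
        apply add_le_add
        · have h := abs_le.mp (hdiag i)
          nlinarith [h.1, h.2]
        · calc ∑ j ∈ Finset.univ.erase i, (A (Pi.single i 1) j) ^ 2
              ≤ ∑ _j ∈ Finset.univ.erase i, m ^ 2 := by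
                refine Finset.sum_le_sum fun j hj => ?_
                have h := hoff i j (Finset.ne_of_mem_erase hj)
                nlinarith [abs_nonneg (A (Pi.single i 1) j),
                  sq_abs (A (Pi.single i 1) j)]
            _ ≤ (n : ℝ) * m ^ 2 := by
                rw [Finset.sum_const, nsmul_eq_mul]
                have hcard : ((Finset.univ.erase i).card : ℝ) ≤ (n : ℝ) := by
                  have := Finset.card_erase_le (a := i) (s := (Finset.univ : Finset (Fin n)))
                  have h2 : (Finset.univ : Finset (Fin n)).card = n := by
                    rw [Finset.card_univ, Fintype.card_fin]
                  exact_mod_cast h2 ▸ this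
                nlinarith [sq_nonneg m]
      calc ∑ i, ∑ j, (A (Pi.single i 1) j) ^ 2
          ≤ ∑ _i : Fin n, ((1 + m) ^ 2 + (n : ℝ) * m ^ 2) :=
            Finset.sum_le_sum fun i _ => hrow i
        _ = (n : ℝ) * ((1 + m) ^ 2 + (n : ℝ) * m ^ 2) := by
            rw [Finset.sum_const, Finset.card_univ, Fintype.card_fin, nsmul_eq_mul]
    -- sqrt of Frobenius bound
    have hnr : (0:ℝ) ≤ (n:ℝ) := by positivity
    have hsn : Real.sqrt (n:ℝ) * Real.sqrt (n:ℝ) = (n:ℝ) := Real.mul_self_sqrt hnr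
    have hsn1 : 1 ≤ Real.sqrt (n:ℝ) := by
      rw [show (1:ℝ) = Real.sqrt 1 by simp]
      exact Real.sqrt_le_sqrt (by exact_mod_cast hN)
    have hsqrtG : Real.sqrt (∑ i, ∑ j, (A (Pi.single i 1) j) ^ 2) ≤
        Real.sqrt (n:ℝ) * (1 + m) + (n : ℝ) * m := by
      have h1 : ∑ i, ∑ j, (A (Pi.single i 1) j) ^ 2 ≤
          (Real.sqrt (n:ℝ) * (1 + m) + (n : ℝ) * m) ^ 2 := by
        nlinarith [hG, hsn,
          mul_nonneg (mul_nonneg (Real.sqrt_nonneg (n:ℝ))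
            (by linarith : (0:ℝ) ≤ 1 + m)) (mul_nonneg hnr hm0)]
      calc Real.sqrt (∑ i, ∑ j, (A (Pi.single i 1) j) ^ 2)
          ≤ Real.sqrt ((Real.sqrt (n:ℝ) * (1 + m) + (n : ℝ) * m) ^ 2) :=
            Real.sqrt_le_sqrt h1
        _ = Real.sqrt (n:ℝ) * (1 + m) + (n : ℝ) * m := by
            apply Real.sqrt_sq
            have : 0 ≤ Real.sqrt (n:ℝ) * (1 + m) := by positivity
            positivity
    -- combine with the trace lemma
    have hkey := trace_le_sqrt_rank' A k hfr
    have hmain : (n : ℝ) * (1 - m) ≤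
        sk * (Real.sqrt (n:ℝ) * (1 + m) + (n : ℝ) * m) :=
      htrace_lb.trans (hkey.trans (mul_le_mul_of_nonneg_left hsqrtG (Real.sqrt_nonneg _)))
    -- sqrt n = sqrt 2 * sk
    have hsns : Real.sqrt (n:ℝ) = Real.sqrt 2 * sk := by
      rw [hskdef, ← Real.sqrt_mul (by norm_num : (0:ℝ) ≤ 2)]
      congr 1
      rw [hn]; push_cast; ring
    have hncast : (n : ℝ) = 2 * (k : ℝ) := by rw [hn]; push_cast; ring
    rw [hsns, hncast] at hmain
    have e1 : sk * (Real.sqrt 2 * sk * (1 + m) + 2 * (k:ℝ) * m) =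
        Real.sqrt 2 * (k:ℝ) * (1 + m) + 2 * (k:ℝ) * (sk * m) := by
      linear_combination (Real.sqrt 2 * (1 + m)) * hskk
    rw [e1] at hmain
    have hkr0 : (0:ℝ) ≤ (k:ℝ) := by positivity
    have hprod : 0 ≤ m * (k:ℝ) * (sk - 1) :=
      mul_nonneg (mul_nonneg hm0 hkr0) (sub_nonneg.mpr hsk1)
    have t1 : 2 * (k:ℝ) * m ≤ 2 * (k:ℝ) * (sk * m) := by nlinarith [hprod]
    have t2 : Real.sqrt 2 * (k:ℝ) * m ≤ 2 * (k:ℝ) * (sk * m) := by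
      nlinarith [hprod, hs2, mul_nonneg hkr0 hm0]
    have h5 : (2 - Real.sqrt 2) * (k:ℝ) ≤ 6 * (sk * m) * (k:ℝ) := by nlinarith [hmain, t1, t2]
    have h6 : 2 - Real.sqrt 2 ≤ 6 * (sk * m) :=
      le_of_mul_le_mul_right h5 (by linarith)
    have hmlb : (2 - Real.sqrt 2) / 6 * (k : ℝ) ^ (-(1/2) : ℝ) ≤ m := by
      have hrpow : (k:ℝ) ^ (-(1/2) : ℝ) = sk⁻¹ := by
        rw [Real.rpow_neg (by positivity), ← Real.sqrt_eq_rpow]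
      rw [hrpow, ← div_eq_mul_inv, div_le_iff₀ hsk0]
      linarith [h6]
    -- now bound the sSup from below by m
    refine hmlb.trans ?_
    set y : Fin n → ℝ := Pi.single q₀.2 1 with hy
    have hsingle_norm : lpnorm p y ≤ 1 := by
      simp only [lpnorm, if_neg hp_top]
      have hsum : ∑ j, |y j| ^ t = 1 := by
        rw [Finset.sum_eq_single (f := fun j => |y j| ^ t) q₀.2]
        · rw [hy, Pi.single_eq_same, abs_one, Real.one_rpow]
        · intro j _ hj
          rw [hy, Pi.single_eq_of_ne hj, abs_zero, Real.zero_rpow (ne_of_gt ht)]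
        · intro h; exact absurd (Finset.mem_univ _) h
      rw [hsum, Real.one_rpow]
    -- BddAbove of the csSup set
    have hbddT : BddAbove {c : ℝ | ∃ x : Fin n → ℝ, lpnorm p x ≤ 1 ∧
        c = lpnorm ∞ (x - A x)} := by
      refine ⟨1 + ∑ j, ∑ i, |A (Pi.single i 1) j|, ?_⟩
      rintro c ⟨x, hx, rfl⟩
      simp only [lpnorm, if_neg hp_top] at hx
      -- coordinates of x are bounded by 1
      have hsum1 : ∑ j, |x j| ^ t ≤ 1 := by
        have h0 : (0:ℝ) ≤ ∑ j, |x j| ^ t :=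
          Finset.sum_nonneg fun j _ => Real.rpow_nonneg (abs_nonneg _) _
        have heq : ((∑ j, |x j| ^ t) ^ (1/t)) ^ t = ∑ j, |x j| ^ t := by
          rw [← Real.rpow_mul h0, one_div_mul_cancel (ne_of_gt ht), Real.rpow_one]
        calc ∑ j, |x j| ^ t = ((∑ j, |x j| ^ t) ^ (1/t)) ^ t := heq.symm
          _ ≤ 1 ^ t := Real.rpow_le_rpow (Real.rpow_nonneg h0 _) hx ht.le
          _ = 1 := Real.one_rpow t
      have hxb : ∀ i, |x i| ≤ 1 := by
        intro i
        by_contra hcon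
        push_neg at hcon
        have h1 : 1 < |x i| ^ t :=
          (Real.one_lt_rpow_iff_of_pos (lt_trans one_pos hcon)).mpr (Or.inl ⟨hcon, ht⟩)
        have h2 : |x i| ^ t ≤ ∑ j, |x j| ^ t :=
          Finset.single_le_sum (fun j _ => Real.rpow_nonneg (abs_nonneg _) _)
            (Finset.mem_univ i)
        linarith
      -- representation of A x
      have hxrepr : x = ∑ i, x i • (Pi.single i 1 : Fin n → ℝ) := by
        refine ((Finset.univ_sum_single x).symm).trans
          (Finset.sum_congr rfl fun i _ => ?_)
        ext j
        by_cases h : j = i <;> simp [h, Pi.single_apply]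
      have hAx : ∀ j, (A x) j = ∑ i, x i * A (Pi.single i 1) j := by
        intro j
        conv_lhs => rw [hxrepr]
        rw [map_sum]
        simp [Finset.sum_apply]
      simp only [lpnorm, if_pos rfl]
      apply Real.iSup_le
      · intro j
        have hb : |(x - A x) j| ≤ 1 + ∑ i, |A (Pi.single i 1) j| := by
          rw [Pi.sub_apply, hAx j]
          calc |x j - ∑ i, x i * A (Pi.single i 1) j|
              ≤ |x j| + |∑ i, x i * A (Pi.single i 1) j| := abs_sub _ _
            _ ≤ 1 + ∑ i, |A (Pi.single i 1) j| := by
                refine add_le_add (hxb j) ?_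
                calc |∑ i, x i * A (Pi.single i 1) j|
                    ≤ ∑ i, |x i * A (Pi.single i 1) j| := Finset.abs_sum_le_sum_abs _ _
                  _ ≤ ∑ i, |A (Pi.single i 1) j| := by
                      refine Finset.sum_le_sum fun i _ => ?_
                      rw [abs_mul]
                      exact mul_le_of_le_one_left (abs_nonneg _) (hxb i)
        refine hb.trans ?_
        refine add_le_add_right ?_ 1
        exact Finset.single_le_sum
          (f := fun j' => ∑ i, |A (Pi.single i 1) j'|)
          (fun j' _ => Finset.sum_nonneg fun i _ => abs_nonneg _) (Finset.mem_univ j)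
      · positivity
    -- the element realizing m
    have hmem : lpnorm ∞ (y - A y) ∈
        {c : ℝ | ∃ x : Fin n → ℝ, lpnorm p x ≤ 1 ∧ c = lpnorm ∞ (x - A x)} :=
      ⟨y, hsingle_norm, rfl⟩
    have h7 : m ≤ lpnorm ∞ (y - A y) := by
      rw [hq₀]
      simp only [lpnorm, if_pos rfl]
      have hgq : g q₀ = |(y - A y) q₀.1| := by
        rw [Pi.sub_apply, hg, hy]
      rw [hgq]
      exact le_ciSup (f := fun i => |(y - A y) i|)
        (Set.Finite.bddAbove (Set.finite_range _)) q₀.1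
    exact h7.trans (le_csSup hbddT hmem)
end

section
/- Let ρ > 0, let φ belong to the class 𝒱 with α_φ := inf_{t>1} (log φ̄(t))/(log t), and let γ, η ∈ ℝ. If γ > α_φ + η, then sup_{M ≥ 1} 2^{Mηρ} φ(2^M)^ρ Σ_{m=0}^{M} 2^{−mγρ} 2^{−(M−m)ηρ} φ(2^{M−m})^{−ρ} < ∞. -/
open scoped ENNReal

/-- `φ̲(t) = inf_{s ≥ 1} φ(ts)/φ(s)`. -/
noncomputable def lowerRatio (φ : ℝ → ℝ) (t : ℝ) : ℝ :=
  sInf {r : ℝ | ∃ s : ℝ, 1 ≤ s ∧ r = φ (t * s) / φ s}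

/-- `φ̄(t) = sup_{s ≥ 1} φ(ts)/φ(s)`. -/
noncomputable def upperRatio (φ : ℝ → ℝ) (t : ℝ) : ℝ :=
  sSup {r : ℝ | ∃ s : ℝ, 1 ≤ s ∧ r = φ (t * s) / φ s}

/-- A measurable function `φ : [1,∞) → (0,∞)` belongs to the class `𝒱` if
`φ̲` and `φ̄` are measurable and `0 < φ̲(t)` and `φ̄(t) < ∞` for all `t ≥ 1`
(finiteness of `φ̄(t)` is expressed by boundedness of the defining set). -/
structure ClassV (φ : ℝ → ℝ) : Prop where
  pos : ∀ s : ℝ, 1 ≤ s → 0 < φ s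
  meas : Measurable fun s : Set.Ici (1 : ℝ) => φ s
  lower_pos : ∀ t : ℝ, 1 ≤ t → 0 < lowerRatio φ t
  upper_bdd : ∀ t : ℝ, 1 ≤ t → BddAbove {r : ℝ | ∃ s : ℝ, 1 ≤ s ∧ r = φ (t * s) / φ s}
  lower_meas : Measurable fun t : Set.Ici (1 : ℝ) => lowerRatio φ t
  upper_meas : Measurable fun t : Set.Ici (1 : ℝ) => upperRatio φ t

/-- `α_φ = inf_{t > 1} log φ̄(t) / log t`. -/
noncomputable def alphaV (φ : ℝ → ℝ) : ℝ :=
  sInf {r : ℝ | ∃ t : ℝ, 1 < t ∧ r = Real.log (upperRatio φ t) / Real.log t}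

/-- `β_φ = sup_{t > 1} log φ̲(t) / log t`. -/
noncomputable def betaV (φ : ℝ → ℝ) : ℝ :=
  sSup {r : ℝ | ∃ t : ℝ, 1 < t ∧ r = Real.log (lowerRatio φ t) / Real.log t}

section Helpers

open MeasureTheory

variable {φ : ℝ → ℝ}

private lemma ratio_le_upper
    (hbdd : ∀ t : ℝ, 1 ≤ t → BddAbove {r : ℝ | ∃ s : ℝ, 1 ≤ s ∧ r = φ (t * s) / φ s})
    {t s : ℝ} (ht : 1 ≤ t) (hs : 1 ≤ s) :
    φ (t * s) / φ s ≤ upperRatio φ t :=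
  le_csSup (hbdd t ht) ⟨s, hs, rfl⟩

private lemma upper_pos' (hpos : ∀ s : ℝ, 1 ≤ s → 0 < φ s)
    (hbdd : ∀ t : ℝ, 1 ≤ t → BddAbove {r : ℝ | ∃ s : ℝ, 1 ≤ s ∧ r = φ (t * s) / φ s})
    {t : ℝ} (ht : 1 ≤ t) : 0 < upperRatio φ t := by
  have h1 : (0:ℝ) < φ (t * 1) / φ 1 :=
    div_pos (hpos _ (by rw [mul_one]; exact ht)) (hpos 1 le_rfl)
  exact h1.trans_le (ratio_le_upper hbdd ht le_rfl)

private lemma upper_submul (hpos : ∀ s : ℝ, 1 ≤ s → 0 < φ s)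
    (hbdd : ∀ t : ℝ, 1 ≤ t → BddAbove {r : ℝ | ∃ s : ℝ, 1 ≤ s ∧ r = φ (t * s) / φ s})
    {t₁ t₂ : ℝ} (h₁ : 1 ≤ t₁) (h₂ : 1 ≤ t₂) :
    upperRatio φ (t₁ * t₂) ≤ upperRatio φ t₁ * upperRatio φ t₂ := by
  have hne : {r : ℝ | ∃ s : ℝ, 1 ≤ s ∧ r = φ (t₁ * t₂ * s) / φ s}.Nonempty :=
    ⟨_, 1, le_rfl, rfl⟩
  apply csSup_le hne
  rintro r ⟨s, hs, rfl⟩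
  have hts : (1:ℝ) ≤ t₂ * s := by nlinarith
  have hQ : 0 < φ (t₂ * s) := hpos _ hts
  have hkey : φ (t₁ * t₂ * s) / φ s = (φ (t₁ * (t₂ * s)) / φ (t₂ * s)) * (φ (t₂ * s) / φ s) := by
    rw [mul_assoc]
    field_simp
  rw [hkey]
  have ha := ratio_le_upper hbdd h₁ hts
  have hb := ratio_le_upper hbdd h₂ hs
  have ha0 : 0 ≤ φ (t₁ * (t₂ * s)) / φ (t₂ * s) :=
    div_nonneg (hpos _ (by nlinarith)).le hQ.le
  have hb0 : 0 ≤ φ (t₂ * s) / φ s := div_nonneg hQ.le (hpos _ hs).le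
  exact mul_le_mul ha hb hb0 ((upper_pos' hpos hbdd h₁).le)

private lemma bdd_on_window (g : ℝ → ℝ)
    (hmeas : ∀ a : ℝ, MeasurableSet {x : ℝ | 0 ≤ x ∧ g x ≤ a})
    (hsub : ∀ x y : ℝ, 0 ≤ x → 0 ≤ y → g (x + y) ≤ g x + g y)
    {L : ℝ} (hL : 0 < L) :
    ∃ B : ℝ, ∀ x ∈ Set.Icc (3/2*L) (3*L), g x ≤ B := by
  set μ := (volume : Measure ℝ) with hμ
  set E : ℕ → Set ℝ := fun n => {x | 0 ≤ x ∧ g x ≤ n} ∩ Set.Icc 0 (3*L) with hE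
  have hEm : ∀ n, MeasurableSet (E n) := fun n => (hmeas n).inter measurableSet_Icc
  have hmono : Monotone E := by
    intro a b hab x hx
    exact ⟨⟨hx.1.1, hx.1.2.trans (by exact_mod_cast hab)⟩, hx.2⟩
  have hunion : ⋃ n, E n = Set.Icc 0 (3*L) := by
    ext x
    simp only [Set.mem_iUnion, hE, Set.mem_inter_iff, Set.mem_setOf_eq]
    constructor
    · rintro ⟨n, hn⟩; exact hn.2
    · intro hx
      obtain ⟨n, hn⟩ := exists_nat_ge (g x)
      exact ⟨n, ⟨hx.1, hn⟩, hx⟩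
  have htend : Filter.Tendsto (fun n => μ (E n)) Filter.atTop (nhds (μ (Set.Icc 0 (3*L)))) := by
    rw [← hunion]
    exact tendsto_measure_iUnion_atTop hmono
  have hlt : ENNReal.ofReal (11/4*L) < μ (Set.Icc 0 (3*L)) := by
    rw [hμ, Real.volume_Icc]
    apply ENNReal.ofReal_lt_ofReal_iff_of_nonneg (by linarith) |>.2
    linarith
  obtain ⟨n, hn⟩ := (htend.eventually (lt_mem_nhds hlt)).exists
  refine ⟨2 * n, ?_⟩
  intro x hx
  obtain ⟨hx1, hx2⟩ := hx
  set D := Set.Icc 0 (3*L) \ E n with hD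
  have hDm : MeasurableSet D := measurableSet_Icc.diff (hEm n)
  have hEIcc : E n ⊆ Set.Icc 0 (3*L) := Set.inter_subset_right
  have hIccfin : μ (Set.Icc 0 (3*L)) ≠ ⊤ := by
    rw [hμ, Real.volume_Icc]; exact ENNReal.ofReal_ne_top
  have hDμ : μ D < ENNReal.ofReal (L/4) := by
    have hdiff : μ D = μ (Set.Icc 0 (3*L)) - μ (E n) :=
      measure_diff hEIcc (hEm n).nullMeasurableSet
        (ne_top_of_le_ne_top hIccfin (measure_mono hEIcc))
    rw [hdiff]
    rw [ENNReal.sub_lt_iff_lt_right (ne_top_of_le_ne_top hIccfin (measure_mono hEIcc))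
      (measure_mono hEIcc)]
    calc μ (Set.Icc 0 (3*L)) = ENNReal.ofReal (3*L) := by
          rw [hμ, Real.volume_Icc]; norm_num
      _ ≤ ENNReal.ofReal (L/4) + ENNReal.ofReal (11/4*L) := by
          rw [← ENNReal.ofReal_add (by linarith) (by linarith)]
          apply ENNReal.ofReal_le_ofReal; linarith
      _ < ENNReal.ofReal (L/4) + μ (E n) := by
          exact ENNReal.add_lt_add_left ENNReal.ofReal_ne_top hn
  set R := (fun y => x - y) ⁻¹' D with hR
  have hRμ : μ R = μ D := by
    have hres : R = Neg.neg ⁻¹' ((fun y => x + y) ⁻¹' D) := by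
      ext y; simp [hR, sub_eq_add_neg]
    rw [hres, hμ]
    have hpre : volume ((fun y => x + y) ⁻¹' D) = volume D := measure_preimage_add _ _ _
    rw [← hpre]
    exact (Measure.measurePreserving_neg (volume : Measure ℝ)).measure_preimage
      (measurable_const_add x hDm).nullMeasurableSet
  have hT : (E n ∩ (fun y => x - y) ⁻¹' (E n)).Nonempty := by
    by_contra hemp
    rw [Set.not_nonempty_iff_eq_empty] at hemp
    have hcover : Set.Icc 0 x ⊆ D ∪ R := by
      intro y hy
      by_cases hyD : y ∈ D
      · exact Or.inl hyD
      by_cases hyR : y ∈ R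
      · exact Or.inr hyR
      exfalso
      have hy3 : y ∈ Set.Icc 0 (3*L) := ⟨hy.1, hy.2.trans hx2⟩
      have hyE : y ∈ E n := by
        by_contra h; exact hyD ⟨hy3, h⟩
      have hxy3 : x - y ∈ Set.Icc 0 (3*L) := ⟨by linarith [hy.2], by linarith [hy.1, hx2]⟩
      have hxyE : x - y ∈ E n := by
        by_contra h; exact hyR ⟨hxy3, h⟩
      have hyT : y ∈ E n ∩ (fun y => x - y) ⁻¹' (E n) := ⟨hyE, hxyE⟩
      rw [hemp] at hyT; exact hyT
    have h1 : μ (Set.Icc 0 x) ≤ μ D + μ R := le_trans (measure_mono hcover) (measure_union_le _ _)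
    have h2 : μ (Set.Icc 0 x) = ENNReal.ofReal x := by rw [hμ, Real.volume_Icc]; norm_num
    rw [h2, hRμ] at h1
    have h3 : μ D + μ D < ENNReal.ofReal (L/4) + ENNReal.ofReal (L/4) :=
      ENNReal.add_lt_add hDμ hDμ
    have h4 : ENNReal.ofReal (L/4) + ENNReal.ofReal (L/4) ≤ ENNReal.ofReal x := by
      rw [← ENNReal.ofReal_add (by linarith) (by linarith)]
      apply ENNReal.ofReal_le_ofReal; linarith
    exact absurd (lt_of_le_of_lt h1 (lt_of_lt_of_le h3 h4)) (lt_irrefl _)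
  obtain ⟨y, hyE, hxyE⟩ := hT
  have hy0 : 0 ≤ y := hyE.1.1
  have hxy0 : 0 ≤ x - y := hxyE.1.1
  have hgx : g x ≤ g y + g (x - y) := by
    have h := hsub y (x - y) hy0 hxy0
    rwa [add_sub_cancel] at h
  calc g x ≤ g y + g (x - y) := hgx
    _ ≤ (n : ℝ) + (n : ℝ) := add_le_add hyE.1.2 hxyE.1.2
    _ = 2 * n := by ring

private lemma g_iter (g : ℝ → ℝ) (hsub : ∀ x y : ℝ, 0 ≤ x → 0 ≤ y → g (x + y) ≤ g x + g y)
    {x : ℝ} (hx : 0 ≤ x) : ∀ (k : ℕ) (r : ℝ), 0 ≤ r → g ((k : ℝ) * x + r) ≤ (k : ℝ) * g x + g r := by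
  intro k
  induction k with
  | zero => intro r hr; simp
  | succ k ih =>
    intro r hr
    have h1 : ((k:ℝ)+1) * x + r = x + ((k:ℝ) * x + r) := by ring
    push_cast
    rw [h1]
    have h2 : g (x + ((k:ℝ) * x + r)) ≤ g x + g ((k:ℝ) * x + r) :=
      hsub _ _ hx (by positivity)
    have h3 := ih r hr
    linarith

private lemma g_linear (g : ℝ → ℝ) (hsub : ∀ x y : ℝ, 0 ≤ x → 0 ≤ y → g (x + y) ≤ g x + g y)
    {L B : ℝ} (hL : 0 < L) (hB : ∀ x ∈ Set.Icc (3/2*L) (3*L), g x ≤ B) :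
    ∀ u : ℝ, 3/2*L ≤ u → g u ≤ (g L / L) * u + (5/2 * |g L| + B) := by
  intro u hu
  set k := ⌊(u - 3/2*L)/L⌋₊ with hk
  have h0 : 0 ≤ (u - 3/2*L)/L := div_nonneg (by linarith) hL.le
  have hk1 : (k:ℝ) * L ≤ u - 3/2*L := by
    have h := Nat.floor_le h0
    have h2 : (k:ℝ) * L ≤ ((u - 3/2*L)/L) * L := by nlinarith
    rwa [div_mul_cancel₀ _ hL.ne'] at h2
  have hk2 : u - 3/2*L < ((k:ℝ)+1)*L := by
    have h := Nat.lt_floor_add_one ((u - 3/2*L)/L)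
    have h2 : (u - 3/2*L)/L * L < ((k:ℝ)+1) * L := by nlinarith
    rwa [div_mul_cancel₀ _ hL.ne'] at h2
  set r := u - (k:ℝ)*L with hr
  have hrI : r ∈ Set.Icc (3/2*L) (3*L) := ⟨by simp only [hr]; linarith,
    by simp only [hr]; nlinarith⟩
  have hgu : g u ≤ (k:ℝ) * g L + B := by
    have heq : u = (k:ℝ) * L + r := by rw [hr]; ring
    rw [heq]
    have h := g_iter g hsub hL.le k r (by simp only [hr]; nlinarith)
    have hBr := hB r hrI
    linarith
  have hkey : (k:ℝ) * g L * L ≤ g L * u + 5/2*|g L| * L := by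
    rcases le_or_gt 0 (g L) with h | h
    · rw [abs_of_nonneg h]; nlinarith
    · rw [abs_of_neg h]; nlinarith
  have hkgL : (k:ℝ) * g L ≤ (g L / L) * u + 5/2 * |g L| := by
    have e1 : (k:ℝ) * g L = ((k:ℝ) * g L * L)/L := by field_simp
    have e2 : (g L / L) * u + 5/2 * |g L| = (g L * u + 5/2*|g L| * L)/L := by
      rw [eq_div_iff hL.ne']
      field_simp
      try ring
    rw [e1, e2]
    gcongr
  linarith

private lemma g_all (g : ℝ → ℝ) (hsub : ∀ x y : ℝ, 0 ≤ x → 0 ≤ y → g (x + y) ≤ g x + g y)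
    {L B : ℝ} (hL : 0 < L) (hB : ∀ x ∈ Set.Icc (3/2*L) (3*L), g x ≤ B) :
    ∃ K : ℝ, ∀ m : ℕ, g ((m : ℝ) * Real.log 2) ≤ (g L / L) * ((m : ℝ) * Real.log 2) + K := by
  have hl2 : 0 < Real.log 2 := Real.log_pos one_lt_two
  set l2 := Real.log 2 with hl2d
  set N₀ := ⌈(3/2*L)/l2⌉₊ with hN₀
  refine ⟨|g 0| + (N₀:ℝ) * |g l2| + 3/2*L*|g L / L| + 5/2*|g L| + |B|, ?_⟩
  intro m
  have hnn1 : 0 ≤ |g 0| := abs_nonneg _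
  have hnn2 : 0 ≤ (N₀:ℝ) * |g l2| := by positivity
  have hnn3 : 0 ≤ 3/2*L*|g L / L| := by positivity
  have hnn4 : 0 ≤ 5/2*|g L| := by positivity
  have hnn5 : B ≤ |B| := le_abs_self B
  have hnn6 : (0:ℝ) ≤ |B| := abs_nonneg B
  rcases le_or_gt (3/2*L) ((m:ℝ) * l2) with hbig | hsmall
  · have h := g_linear g hsub hL hB ((m:ℝ)*l2) hbig
    linarith
  · have habs : -(3/2*L*|g L / L|) ≤ (g L / L) * ((m:ℝ) * l2) := by
      have h1 : |(g L / L) * ((m:ℝ) * l2)| ≤ |g L / L| * (3/2*L) := by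
        rw [abs_mul]
        apply mul_le_mul_of_nonneg_left _ (abs_nonneg _)
        rw [abs_of_nonneg (by positivity)]
        linarith
      have h2 := neg_abs_le ((g L / L) * ((m:ℝ) * l2))
      linarith
    rcases Nat.eq_zero_or_pos m with hm0 | hm1
    · subst hm0
      simp only [Nat.cast_zero, zero_mul]
      have h := le_abs_self (g 0)
      linarith
    · obtain ⟨j, rfl⟩ := Nat.exists_eq_succ_of_ne_zero hm1.ne'
      have hstep : g (((j+1 : ℕ):ℝ) * l2) ≤ ((j+1 : ℕ):ℝ) * g l2 := by
        have h := g_iter g hsub hl2.le j l2 hl2.le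
        push_cast
        push_cast at h
        calc g (((j:ℝ)+1) * l2) = g ((j:ℝ) * l2 + l2) := by ring_nf
          _ ≤ (j:ℝ) * g l2 + g l2 := h
          _ = ((j:ℝ)+1) * g l2 := by ring
      have hmN : ((j+1:ℕ):ℝ) ≤ (N₀:ℝ) := by
        have h1 : ((j+1:ℕ):ℝ) ≤ (3/2*L)/l2 := by
          rw [le_div_iff₀ hl2]
          linarith
        calc ((j+1:ℕ):ℝ) ≤ (3/2*L)/l2 := h1
          _ ≤ (N₀:ℝ) := Nat.le_ceil _
      have hbound : ((j+1:ℕ):ℝ) * g l2 ≤ (N₀:ℝ) * |g l2| := by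
        calc ((j+1:ℕ):ℝ) * g l2 ≤ ((j+1:ℕ):ℝ) * |g l2| :=
              mul_le_mul_of_nonneg_left (le_abs_self _) (by positivity)
          _ ≤ (N₀:ℝ) * |g l2| := mul_le_mul_of_nonneg_right hmN (abs_nonneg _)
      have hfin := hstep.trans hbound
      push_cast at hfin habs hsmall ⊢
      linarith

end Helpers

/-- Let `ρ > 0`, `φ ∈ 𝒱` and `γ > α_φ + η`.  Then
`sup_{M ≥ 1} 2^{Mηρ} φ(2^M)^ρ ∑_{m=0}^{M} 2^{-mγρ} 2^{-(M-m)ηρ} φ(2^{M-m})^{-ρ} < ∞`. -/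
theorem classV_sum_bound_alpha (ρ : ℝ) (hρ : 0 < ρ) (φ : ℝ → ℝ) (hφ : ClassV φ)
    (γ η : ℝ) (hγ : γ > alphaV φ + η) :
    ∃ C : ℝ, ∀ M : ℕ, 1 ≤ M →
      (2 : ℝ) ^ ((M : ℝ) * η * ρ) * φ ((2 : ℝ) ^ M) ^ ρ *
        ∑ m ∈ Finset.range (M + 1),
          (2 : ℝ) ^ (-(m : ℝ) * γ * ρ) * (2 : ℝ) ^ (-((M - m : ℕ) : ℝ) * η * ρ) *
            φ ((2 : ℝ) ^ (M - m)) ^ (-ρ) ≤ C := by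
  classical
  have hpos := hφ.pos
  have hbdd := hφ.upper_bdd
  have hup : ∀ t : ℝ, 1 ≤ t → 0 < upperRatio φ t := fun t ht => upper_pos' hpos hbdd ht
  set g : ℝ → ℝ := fun u => Real.log (upperRatio φ (Real.exp u)) with hg
  have hsub : ∀ x y : ℝ, 0 ≤ x → 0 ≤ y → g (x + y) ≤ g x + g y := by
    intro x y hx hy
    have hex : (1:ℝ) ≤ Real.exp x := Real.one_le_exp hx
    have hey : (1:ℝ) ≤ Real.exp y := Real.one_le_exp hy
    have h1 : upperRatio φ (Real.exp (x+y)) ≤ upperRatio φ (Real.exp x) * upperRatio φ (Real.exp y) := by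
      rw [Real.exp_add]
      exact upper_submul hpos hbdd hex hey
    have h2 : 0 < upperRatio φ (Real.exp (x+y)) := hup _ (Real.one_le_exp (by linarith))
    calc g (x+y) = Real.log (upperRatio φ (Real.exp (x+y))) := rfl
      _ ≤ Real.log (upperRatio φ (Real.exp x) * upperRatio φ (Real.exp y)) :=
          Real.log_le_log h2 h1
      _ = g x + g y := Real.log_mul (hup _ hex).ne' (hup _ hey).ne'
  have hmeas : ∀ a : ℝ, MeasurableSet {x : ℝ | 0 ≤ x ∧ g x ≤ a} := by
    intro a
    have h1 : MeasurableSet {t : ℝ | 1 ≤ t ∧ Real.log (upperRatio φ t) ≤ a} := by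
      have he : {t : ℝ | 1 ≤ t ∧ Real.log (upperRatio φ t) ≤ a}
          = Subtype.val '' ((fun t : Set.Ici (1:ℝ) => Real.log (upperRatio φ ↑t)) ⁻¹' Set.Iic a) := by
        ext t
        simp only [Set.mem_setOf_eq, Set.mem_image, Set.mem_preimage, Set.mem_Iic]
        constructor
        · rintro ⟨ht, hlog⟩
          exact ⟨⟨t, ht⟩, hlog, rfl⟩
        · rintro ⟨⟨t', ht'⟩, hlog, rfl⟩
          exact ⟨ht', hlog⟩
      rw [he]
      exact MeasurableSet.subtype_image measurableSet_Ici
        ((Real.measurable_log.comp hφ.upper_meas) measurableSet_Iic)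
    have he2 : {x : ℝ | 0 ≤ x ∧ g x ≤ a}
        = Real.exp ⁻¹' {t : ℝ | 1 ≤ t ∧ Real.log (upperRatio φ t) ≤ a} := by
      ext x
      simp only [Set.mem_setOf_eq, Set.mem_preimage, Real.one_le_exp_iff, hg]
    rw [he2]
    exact Real.measurable_exp h1
  -- choose t₀ with log ū(t₀)/log t₀ < γ - η
  have hSne : {r : ℝ | ∃ t : ℝ, 1 < t ∧ r = Real.log (upperRatio φ t) / Real.log t}.Nonempty :=
    ⟨_, 2, one_lt_two, rfl⟩
  have hex0 : ∃ r ∈ {r : ℝ | ∃ t : ℝ, 1 < t ∧ r = Real.log (upperRatio φ t) / Real.log t},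
      r < γ - η := by
    by_cases hb : BddBelow {r : ℝ | ∃ t : ℝ, 1 < t ∧ r = Real.log (upperRatio φ t) / Real.log t}
    · apply (csInf_lt_iff hb hSne).1
      have : alphaV φ < γ - η := by linarith
      exact this
    · exact not_bddBelow_iff.1 hb (γ - η)
  obtain ⟨r, ⟨t₀, ht₀, rfl⟩, hrlt⟩ := hex0
  set L := Real.log t₀ with hLd
  have hL : 0 < L := Real.log_pos ht₀
  have hgL : g L = Real.log (upperRatio φ t₀) := by
    simp only [hg, hLd, Real.exp_log (by linarith : (0:ℝ) < t₀)]
  have hc₁lt : g L / L < γ - η := by rw [hgL]; exact hrlt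
  obtain ⟨B, hB⟩ := bdd_on_window g hmeas hsub hL
  obtain ⟨K, hK⟩ := g_all g hsub hL hB
  set c₁ := g L / L with hc₁d
  -- uniform bound on ū(2^m)
  have hub : ∀ m : ℕ, upperRatio φ ((2:ℝ)^m) ≤ Real.exp (c₁ * ((m:ℝ) * Real.log 2) + K) := by
    intro m
    have he : Real.exp ((m:ℝ) * Real.log 2) = (2:ℝ)^m := by
      rw [Real.exp_nat_mul, Real.exp_log two_pos]
    have h1 : g ((m:ℝ) * Real.log 2) = Real.log (upperRatio φ ((2:ℝ)^m)) := by
      simp only [hg, he]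
    have h2 := hK m
    rw [h1] at h2
    have h3 : 0 < upperRatio φ ((2:ℝ)^m) := hup _ (one_le_pow₀ one_le_two)
    calc upperRatio φ ((2:ℝ)^m) = Real.exp (Real.log (upperRatio φ ((2:ℝ)^m))) :=
          (Real.exp_log h3).symm
      _ ≤ Real.exp (c₁ * ((m:ℝ) * Real.log 2) + K) := Real.exp_le_exp.2 h2
  set q := (2:ℝ) ^ ((η - γ + c₁) * ρ) with hqd
  have hq0 : 0 < q := Real.rpow_pos_of_pos two_pos _
  have hq1 : q < 1 := by
    apply Real.rpow_lt_one_of_one_lt_of_neg one_lt_two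
    nlinarith
  have h1q : 0 < 1 - q := by linarith
  have hgeom : ∀ n : ℕ, ∑ m ∈ Finset.range n, q^m ≤ 1/(1-q) := by
    intro n
    rw [geom_sum_eq (ne_of_lt hq1) n]
    have heq : (q^n - 1)/(q-1) = (1 - q^n)/(1-q) := by
      rw [← neg_div_neg_eq]; ring_nf
    rw [heq]
    have hle : 1 - q^n ≤ 1 := by nlinarith [pow_nonneg hq0.le n]
    exact (div_le_div_iff_of_pos_right h1q).2 hle
  refine ⟨Real.exp (K*ρ) * (1/(1-q)), ?_⟩
  intro M _
  rw [Finset.mul_sum]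
  have hterm : ∀ m ∈ Finset.range (M+1),
      (2 : ℝ) ^ ((M : ℝ) * η * ρ) * φ ((2 : ℝ) ^ M) ^ ρ *
        ((2 : ℝ) ^ (-(m : ℝ) * γ * ρ) * (2 : ℝ) ^ (-((M - m : ℕ) : ℝ) * η * ρ) *
          φ ((2 : ℝ) ^ (M - m)) ^ (-ρ))
      ≤ Real.exp (K*ρ) * q^m := by
    intro m hm
    have hmM : m ≤ M := Nat.lt_succ_iff.1 (Finset.mem_range.1 hm)
    have h2M : (1:ℝ) ≤ (2:ℝ)^M := one_le_pow₀ one_le_two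
    have h2Mm : (1:ℝ) ≤ (2:ℝ)^(M-m) := one_le_pow₀ one_le_two
    have h2m : (1:ℝ) ≤ (2:ℝ)^m := one_le_pow₀ one_le_two
    have hPpos : 0 < φ ((2:ℝ)^M) := hpos _ h2M
    have hQpos : 0 < φ ((2:ℝ)^(M-m)) := hpos _ h2Mm
    have hratio : φ ((2:ℝ)^M) / φ ((2:ℝ)^(M-m)) ≤ upperRatio φ ((2:ℝ)^m) := by
      have hsplit : (2:ℝ)^M = (2:ℝ)^m * (2:ℝ)^(M-m) := by
        rw [← pow_add]
        congr 1
        omega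
      rw [hsplit]
      exact ratio_le_upper hbdd h2m h2Mm
    have hcast : ((M - m : ℕ):ℝ) = (M:ℝ) - (m:ℝ) := by
      push_cast [Nat.cast_sub hmM]; ring
    -- rewrite φ-powers as a quotient power
    have hPQ : φ ((2:ℝ)^M) ^ ρ * φ ((2:ℝ)^(M-m)) ^ (-ρ)
        = (φ ((2:ℝ)^M) / φ ((2:ℝ)^(M-m))) ^ ρ := by
      rw [Real.div_rpow hPpos.le hQpos.le, Real.rpow_neg hQpos.le, div_eq_mul_inv]
    -- bound the quotient power
    have hquot : (φ ((2:ℝ)^M) / φ ((2:ℝ)^(M-m))) ^ ρ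
        ≤ Real.exp ((c₁ * ((m:ℝ) * Real.log 2) + K) * ρ) := by
      have h1 : (φ ((2:ℝ)^M) / φ ((2:ℝ)^(M-m))) ^ ρ
          ≤ (Real.exp (c₁ * ((m:ℝ) * Real.log 2) + K)) ^ ρ :=
        Real.rpow_le_rpow (div_nonneg hPpos.le hQpos.le) (hratio.trans (hub m)) hρ.le
      have h2 : (Real.exp (c₁ * ((m:ℝ) * Real.log 2) + K)) ^ ρ
          = Real.exp ((c₁ * ((m:ℝ) * Real.log 2) + K) * ρ) := by
        rw [Real.rpow_def_of_pos (Real.exp_pos _), Real.log_exp]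
      rw [h2] at h1
      exact h1
    -- rearrange the product
    have hre : (2 : ℝ) ^ ((M : ℝ) * η * ρ) * φ ((2 : ℝ) ^ M) ^ ρ *
        ((2 : ℝ) ^ (-(m : ℝ) * γ * ρ) * (2 : ℝ) ^ (-((M - m : ℕ) : ℝ) * η * ρ) *
          φ ((2 : ℝ) ^ (M - m)) ^ (-ρ))
        = ((2 : ℝ) ^ ((M : ℝ) * η * ρ) * (2 : ℝ) ^ (-((M - m : ℕ) : ℝ) * η * ρ)) *
          ((2 : ℝ) ^ (-(m : ℝ) * γ * ρ) *
            (φ ((2:ℝ)^M) ^ ρ * φ ((2:ℝ)^(M-m)) ^ (-ρ))) := by ring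
    rw [hre, hPQ]
    have hA : (2 : ℝ) ^ ((M : ℝ) * η * ρ) * (2 : ℝ) ^ (-((M - m : ℕ) : ℝ) * η * ρ)
        = (2:ℝ) ^ ((m:ℝ) * η * ρ) := by
      rw [← Real.rpow_add two_pos]
      congr 1
      rw [hcast]
      ring
    rw [hA]
    have hstep : (2:ℝ) ^ ((m:ℝ) * η * ρ) *
        ((2 : ℝ) ^ (-(m : ℝ) * γ * ρ) * (φ ((2:ℝ)^M) / φ ((2:ℝ)^(M-m))) ^ ρ)
        ≤ (2:ℝ) ^ ((m:ℝ) * η * ρ) *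
        ((2 : ℝ) ^ (-(m : ℝ) * γ * ρ) * Real.exp ((c₁ * ((m:ℝ) * Real.log 2) + K) * ρ)) := by
      apply mul_le_mul_of_nonneg_left _ (Real.rpow_nonneg two_pos.le _)
      exact mul_le_mul_of_nonneg_left hquot (Real.rpow_nonneg two_pos.le _)
    apply hstep.trans_eq
    -- identify with exp(Kρ) * q^m
    have hqm : q ^ m = Real.exp (((η - γ + c₁) * ρ) * m * Real.log 2) := by
      rw [hqd, ← Real.rpow_natCast ((2:ℝ) ^ ((η - γ + c₁) * ρ)) m, ← Real.rpow_mul two_pos.le,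
        Real.rpow_def_of_pos two_pos]
      ring_nf
    rw [hqm, Real.rpow_def_of_pos two_pos ((m:ℝ) * η * ρ),
      Real.rpow_def_of_pos two_pos (-(m : ℝ) * γ * ρ), ← Real.exp_add, ← Real.exp_add,
      ← Real.exp_add]
    congr 1
    ring
  calc ∑ m ∈ Finset.range (M+1),
        (2 : ℝ) ^ ((M : ℝ) * η * ρ) * φ ((2 : ℝ) ^ M) ^ ρ *
          ((2 : ℝ) ^ (-(m : ℝ) * γ * ρ) * (2 : ℝ) ^ (-((M - m : ℕ) : ℝ) * η * ρ) *
            φ ((2 : ℝ) ^ (M - m)) ^ (-ρ))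
      ≤ ∑ m ∈ Finset.range (M+1), Real.exp (K*ρ) * q^m := Finset.sum_le_sum hterm
    _ = Real.exp (K*ρ) * ∑ m ∈ Finset.range (M+1), q^m := by rw [Finset.mul_sum]
    _ ≤ Real.exp (K*ρ) * (1/(1-q)) :=
        mul_le_mul_of_nonneg_left (hgeom (M+1)) (Real.exp_pos _).le
end

section
/- Let ρ > 0, let φ belong to the class 𝒱 with β_φ := sup_{t>1} (log φ̲(t))/(log t), and let γ, η ∈ ℝ. If γ < β_φ + η, then sup_{M ≥ 1} 2^{Mγρ} Σ_{m=0}^{M} 2^{−mγρ} 2^{−(M−m)ηρ} φ(2^{M−m})^{−ρ} < ∞. -/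
open scoped ENNReal

open MeasureTheory Set

namespace ClassV
variable {φ : ℝ → ℝ} (hφ : ClassV φ)
include hφ

omit hφ in
lemma ratioSet_nonempty (t : ℝ) :
    Set.Nonempty {r : ℝ | ∃ s : ℝ, 1 ≤ s ∧ r = φ (t * s) / φ s} :=
  ⟨φ (t * 1) / φ 1, 1, le_rfl, rfl⟩

lemma ratioSet_bddBelow {t : ℝ} (ht : 1 ≤ t) :
    BddBelow {r : ℝ | ∃ s : ℝ, 1 ≤ s ∧ r = φ (t * s) / φ s} := by
  refine ⟨0, fun r hr => ?_⟩
  obtain ⟨s, hs, rfl⟩ := hr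
  have h1 : (1:ℝ) ≤ t * s := by nlinarith
  exact div_nonneg (hφ.pos _ h1).le (hφ.pos _ hs).le

lemma lowerRatio_mul_le {t s : ℝ} (ht : 1 ≤ t) (hs : 1 ≤ s) :
    lowerRatio φ t * φ s ≤ φ (t * s) := by
  have h := csInf_le (hφ.ratioSet_bddBelow ht) (⟨s, hs, rfl⟩ :
    φ (t * s) / φ s ∈ {r : ℝ | ∃ s' : ℝ, 1 ≤ s' ∧ r = φ (t * s') / φ s'})
  have hps := hφ.pos s hs
  rw [le_div_iff₀ hps] at h
  exact h

lemma le_upperRatio_mul {t s : ℝ} (ht : 1 ≤ t) (hs : 1 ≤ s) :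
    φ (t * s) ≤ upperRatio φ t * φ s := by
  have h := le_csSup (hφ.upper_bdd t ht) (⟨s, hs, rfl⟩ :
    φ (t * s) / φ s ∈ {r : ℝ | ∃ s' : ℝ, 1 ≤ s' ∧ r = φ (t * s') / φ s'})
  have hps := hφ.pos s hs
  rw [div_le_iff₀ hps] at h
  exact h

lemma upperRatio_pos {t : ℝ} (ht : 1 ≤ t) : 0 < upperRatio φ t := by
  have h := hφ.le_upperRatio_mul ht (le_refl 1)
  rw [mul_one] at h
  have := hφ.pos t ht
  have hp1 := hφ.pos 1 le_rfl
  nlinarith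

lemma upperRatio_submul {a b : ℝ} (ha : 1 ≤ a) (hb : 1 ≤ b) :
    upperRatio φ (a * b) ≤ upperRatio φ a * upperRatio φ b := by
  apply csSup_le (ratioSet_nonempty _)
  rintro r ⟨s, hs, rfl⟩
  have hps := hφ.pos s hs
  have hbs : (1:ℝ) ≤ b * s := by nlinarith
  have h1 : φ (a * b * s) ≤ upperRatio φ a * φ (b * s) := by
    rw [mul_assoc]; exact hφ.le_upperRatio_mul ha hbs
  have h2 : φ (b * s) ≤ upperRatio φ b * φ s := hφ.le_upperRatio_mul hb hs
  have hua := hφ.upperRatio_pos ha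
  rw [div_le_iff₀ hps]
  calc φ (a * b * s) ≤ upperRatio φ a * φ (b * s) := h1
    _ ≤ upperRatio φ a * (upperRatio φ b * φ s) := by
        exact mul_le_mul_of_nonneg_left h2 hua.le
    _ = upperRatio φ a * upperRatio φ b * φ s := by ring

lemma lowerRatio_pow_le {t : ℝ} (ht : 1 ≤ t) (n : ℕ) :
    lowerRatio φ t ^ n * φ 1 ≤ φ (t ^ n) := by
  induction n with
  | zero => simp
  | succ n ih =>
    have htn : (1:ℝ) ≤ t ^ n := one_le_pow₀ ht
    calc lowerRatio φ t ^ (n + 1) * φ 1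
        = lowerRatio φ t * (lowerRatio φ t ^ n * φ 1) := by ring
      _ ≤ lowerRatio φ t * φ (t ^ n) :=
          mul_le_mul_of_nonneg_left ih (hφ.lower_pos t ht).le
      _ ≤ φ (t * t ^ n) := hφ.lowerRatio_mul_le ht htn
      _ = φ (t ^ (n + 1)) := by rw [pow_succ]; ring_nf

end ClassV

namespace ClassV
variable {φ : ℝ → ℝ} (hφ : ClassV φ)
include hφ

lemma upperSet_meas (c : ℝ) :
    MeasurableSet {u : ℝ | 1 ≤ u ∧ upperRatio φ u ≤ c} := by
  have h1 : {u : ℝ | 1 ≤ u ∧ upperRatio φ u ≤ c}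
      = Subtype.val '' {x : Set.Ici (1:ℝ) | upperRatio φ ↑x ≤ c} := by
    ext u
    constructor
    · rintro ⟨h1, h2⟩; exact ⟨⟨u, h1⟩, h2, rfl⟩
    · rintro ⟨⟨v, hv⟩, h2, rfl⟩; exact ⟨hv, h2⟩
  rw [h1]
  exact MeasurableSet.subtype_image measurableSet_Ici
    (hφ.upper_meas measurableSet_Iic)

/-- Key Steinhaus-free boundedness: `upperRatio φ` is bounded on `exp [L, 2L]`. -/
lemma upperRatio_bdd {L : ℝ} (hL : 0 < L) :
    ∃ K : ℝ, ∀ x ∈ Set.Icc L (2 * L), upperRatio φ (Real.exp x) ≤ K := by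
  classical
  set B : ℕ → Set ℝ := fun n =>
    Set.Icc 0 (2 * L) ∩ Real.exp ⁻¹' {u : ℝ | 1 ≤ u ∧ upperRatio φ u ≤ n} with hB
  have hBmeas : ∀ n, MeasurableSet (B n) := fun n =>
    measurableSet_Icc.inter (Real.measurable_exp (hφ.upperSet_meas n))
  have hBmono : Monotone B := by
    intro n m hnm x hx
    exact ⟨hx.1, hx.2.1, hx.2.2.trans (by exact_mod_cast Nat.cast_le.mpr hnm)⟩
  have hBsub : ∀ n, B n ⊆ Set.Icc 0 (2 * L) := fun n => Set.inter_subset_left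
  have hUnion : (⋃ n, B n) = Set.Icc 0 (2 * L) := by
    apply Set.Subset.antisymm (Set.iUnion_subset hBsub)
    intro x hx
    obtain ⟨n, hn⟩ := exists_nat_ge (upperRatio φ (Real.exp x))
    exact Set.mem_iUnion.2 ⟨n, hx, Real.one_le_exp hx.1, hn⟩
  have hTend := MeasureTheory.tendsto_measure_iUnion_atTop (μ := volume) hBmono
  rw [hUnion, Real.volume_Icc] at hTend
  have hlt : ENNReal.ofReal (3 * L / 2) < ENNReal.ofReal (2 * L - 0) := by
    rw [ENNReal.ofReal_lt_ofReal_iff (by linarith)]; linarith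
  have hEv := hTend.eventually_const_lt hlt
  obtain ⟨N, hN⟩ := hEv.exists
  refine ⟨(N : ℝ) * N, ?_⟩
  intro x hx
  -- find s with s ∈ B N and x - s ∈ B N
  set P : Set ℝ := B N ∩ Set.Icc 0 x with hP
  set Q : Set ℝ := (fun s => x - s) ⁻¹' (B N) ∩ Set.Icc 0 x with hQ
  have hPmeas : MeasurableSet P := (hBmeas N).inter measurableSet_Icc
  have hQmeas : MeasurableSet Q :=
    ((measurable_const.sub measurable_id) (hBmeas N)).inter measurableSet_Icc
  have hx0 : 0 < x := lt_of_lt_of_le hL hx.1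
  have hkey : (P ∩ Q).Nonempty := by
    by_contra hcon
    rw [Set.not_nonempty_iff_eq_empty] at hcon
    have hdisj : Disjoint P Q := Set.disjoint_iff_inter_eq_empty.2 hcon
    have hPQ : volume P + volume Q ≤ ENNReal.ofReal x := by
      rw [← measure_union hdisj hQmeas]
      calc volume (P ∪ Q) ≤ volume (Set.Icc 0 x) := by
            apply measure_mono
            rintro s (hs | hs) <;> exact hs.2
        _ = ENNReal.ofReal x := by rw [Real.volume_Icc, sub_zero]
    -- lower bounds
    have hBP : volume (B N) ≤ volume P + ENNReal.ofReal (2 * L - x) := by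
      have : B N ⊆ P ∪ Set.Ioc x (2 * L) := by
        intro s hs
        by_cases h : s ≤ x
        · exact Or.inl ⟨hs, (hBsub N hs).1, h⟩
        · exact Or.inr ⟨not_le.1 h, (hBsub N hs).2⟩
      calc volume (B N) ≤ volume (P ∪ Set.Ioc x (2*L)) := measure_mono this
        _ ≤ volume P + volume (Set.Ioc x (2*L)) := measure_union_le _ _
        _ = volume P + ENNReal.ofReal (2*L - x) := by rw [Real.volume_Ioc]
    have hrefl : volume ((fun s => x - s) ⁻¹' (B N)) = volume (B N) := by
      have h := (measurePreserving_add_left (volume : Measure ℝ) x).comp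
        (Measure.measurePreserving_neg (volume : Measure ℝ))
      have h2 : (fun s : ℝ => x + s) ∘ Neg.neg = fun s => x - s := by
        ext s; simp [sub_eq_add_neg]
      rw [h2] at h
      exact h.measure_preimage (hBmeas N).nullMeasurableSet
    have hBQ : volume (B N) ≤ volume Q + ENNReal.ofReal (2 * L - x) := by
      have hsub : (fun s => x - s) ⁻¹' (B N) ⊆ Q ∪ Set.Ico (x - 2*L) 0 := by
        intro s hs
        have h1 : 0 ≤ x - s := (hBsub N hs).1
        have h2 : x - s ≤ 2 * L := (hBsub N hs).2
        by_cases h : 0 ≤ s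
        · exact Or.inl ⟨hs, h, by linarith⟩
        · exact Or.inr ⟨by linarith, not_le.1 h⟩
      calc volume (B N) = volume ((fun s => x - s) ⁻¹' (B N)) := hrefl.symm
        _ ≤ volume (Q ∪ Set.Ico (x - 2*L) 0) := measure_mono hsub
        _ ≤ volume Q + volume (Set.Ico (x - 2*L) 0) := measure_union_le _ _
        _ = volume Q + ENNReal.ofReal (2*L - x) := by
            rw [Real.volume_Ico]; ring_nf
    have hsum : 2 * volume (B N) ≤ ENNReal.ofReal (3 * L) := by
      calc 2 * volume (B N) = volume (B N) + volume (B N) := two_mul _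
        _ ≤ (volume P + ENNReal.ofReal (2*L - x)) + (volume Q + ENNReal.ofReal (2*L - x)) :=
            add_le_add hBP hBQ
        _ = (volume P + volume Q) + (ENNReal.ofReal (2*L - x) + ENNReal.ofReal (2*L - x)) := by
            ring
        _ ≤ ENNReal.ofReal x + (ENNReal.ofReal (2*L - x) + ENNReal.ofReal (2*L - x)) :=
            add_le_add_left hPQ _
        _ = ENNReal.ofReal (x + ((2*L - x) + (2*L - x))) := by
            rw [← ENNReal.ofReal_add (by linarith [hx.2]) (by linarith [hx.2]),
              ← ENNReal.ofReal_add (by linarith [hx0]) (by linarith [hx.2])]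
        _ ≤ ENNReal.ofReal (3 * L) := by
            apply ENNReal.ofReal_le_ofReal; linarith [hx.1]
    have hgt : ENNReal.ofReal (3 * L) < 2 * volume (B N) := by
      calc ENNReal.ofReal (3 * L) = 2 * ENNReal.ofReal (3 * L / 2) := by
            rw [← ENNReal.ofReal_ofNat, ← ENNReal.ofReal_mul (by norm_num)]
            ring_nf
        _ < 2 * volume (B N) :=
            ENNReal.mul_lt_mul_right (a := 2) (by norm_num) (by norm_num) hN
    exact absurd hsum (not_le.2 hgt)
  obtain ⟨s, hsP, hsQ⟩ := hkey
  have hs1 : 1 ≤ Real.exp s ∧ upperRatio φ (Real.exp s) ≤ N := hsP.1.2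
  have hs2 : 1 ≤ Real.exp (x - s) ∧ upperRatio φ (Real.exp (x - s)) ≤ N := hsQ.1.2
  have hxs : Real.exp x = Real.exp (x - s) * Real.exp s := by
    rw [← Real.exp_add]; ring_nf
  calc upperRatio φ (Real.exp x)
      = upperRatio φ (Real.exp (x - s) * Real.exp s) := by rw [hxs]
    _ ≤ upperRatio φ (Real.exp (x - s)) * upperRatio φ (Real.exp s) :=
        hφ.upperRatio_submul hs2.1 hs1.1
    _ ≤ (N : ℝ) * N := by
        have h1 := hφ.upperRatio_pos hs1.1
        have h2 := hφ.upperRatio_pos hs2.1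
        nlinarith [hs1.2, hs2.2]

end ClassV

namespace ClassV
variable {φ : ℝ → ℝ} (hφ : ClassV φ)
include hφ

set_option maxHeartbeats 2000000 in
lemma exists_growth {δ : ℝ} (hδ : δ < betaV φ) :
    ∃ a q : ℝ, 0 < a ∧ 1 < q ∧
      ∀ k : ℕ, a * q ^ k * (2 : ℝ) ^ ((k : ℝ) * δ) ≤ φ ((2 : ℝ) ^ k) := by
  have hne : {r : ℝ | ∃ t : ℝ, 1 < t ∧ r = Real.log (lowerRatio φ t) / Real.log t}.Nonempty :=
    ⟨_, 2, one_lt_two, rfl⟩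
  obtain ⟨r, ⟨t, ht1, rfl⟩, hr⟩ := exists_lt_of_lt_csSup hne hδ
  set L := Real.log t with hLdef
  have hL : 0 < L := Real.log_pos ht1
  have hlow : 0 < lowerRatio φ t := hφ.lower_pos t ht1.le
  have hkey : Real.exp (L * δ) < lowerRatio φ t := by
    rw [← Real.exp_log hlow]
    apply Real.exp_lt_exp.2
    rw [lt_div_iff₀ hL] at hr
    nlinarith
  obtain ⟨K, hK⟩ := hφ.upperRatio_bdd hL
  set K' := max K 1 with hK'def
  have hK'1 : (1:ℝ) ≤ K' := le_max_right _ _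
  have hK'0 : (0:ℝ) < K' := lt_of_lt_of_le one_pos hK'1
  set lam := lowerRatio φ t / Real.exp (L * δ) with hlamdef
  have hlam1 : 1 < lam := (one_lt_div (Real.exp_pos _)).2 hkey
  have hloglam : 0 < Real.log lam := Real.log_pos hlam1
  have hdecomp : lowerRatio φ t = Real.exp (L * δ) * lam := by
    rw [hlamdef]; field_simp
  set q := Real.exp (Real.log 2 * Real.log lam / L) with hqdef
  have hq : 1 < q := by
    rw [show (1:ℝ) = Real.exp 0 by simp]
    apply Real.exp_lt_exp.2
    positivity
  have hφ1 : 0 < φ 1 := hφ.pos 1 le_rfl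
  refine ⟨φ 1 * Real.exp (-(2 * L * |δ|)) / K', q, by positivity, hq, ?_⟩
  intro k
  set x := (k : ℝ) * Real.log 2 with hxdef
  have hlog2 : (0:ℝ) < Real.log 2 := Real.log_pos one_lt_two
  have hx0 : 0 ≤ x := by positivity
  set n := ⌊x / L⌋₊ with hndef
  have hn1 : (n : ℝ) * L ≤ x := by
    have := Nat.floor_le (a := x / L) (by positivity)
    rw [← hndef] at this
    calc (n:ℝ) * L ≤ x / L * L := by nlinarith
      _ = x := by field_simp
  have hn2 : x < ((n : ℝ) + 1) * L := by
    have := Nat.lt_floor_add_one (x / L)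
    rw [← hndef] at this
    calc x = x / L * L := by field_simp
      _ < ((n:ℝ) + 1) * L := by nlinarith
  have h2k : (2 : ℝ) ^ (k:ℕ) = Real.exp x := by
    rw [hxdef, Real.exp_nat_mul, Real.exp_log two_pos]
  have hexpx1 : (1:ℝ) ≤ Real.exp x := Real.one_le_exp hx0
  have h2k1 : (1:ℝ) ≤ (2:ℝ) ^ (k:ℕ) := one_le_pow₀ one_le_two
  -- the bridge point w
  have hw1 : L ≤ ((n:ℝ) + 2) * L - x := by nlinarith
  have hw2 : ((n:ℝ) + 2) * L - x ≤ 2 * L := by nlinarith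
  have hKw : upperRatio φ (Real.exp (((n:ℝ) + 2) * L - x)) ≤ K' :=
    (hK _ ⟨hw1, hw2⟩).trans (le_max_left _ _)
  have hexpw1 : (1:ℝ) ≤ Real.exp (((n:ℝ) + 2) * L - x) :=
    Real.one_le_exp (by linarith)
  have hstep1 : φ (Real.exp (((n:ℝ) + 2) * L)) ≤ K' * φ ((2:ℝ) ^ (k:ℕ)) := by
    have hsplit : Real.exp (((n:ℝ) + 2) * L)
        = Real.exp (((n:ℝ) + 2) * L - x) * Real.exp x := by
      rw [← Real.exp_add]; ring_nf
    rw [hsplit, h2k]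
    calc φ (Real.exp (((n:ℝ) + 2) * L - x) * Real.exp x)
        ≤ upperRatio φ (Real.exp (((n:ℝ) + 2) * L - x)) * φ (Real.exp x) :=
          hφ.le_upperRatio_mul hexpw1 hexpx1
      _ ≤ K' * φ (Real.exp x) := by
          have := hφ.pos _ hexpx1
          nlinarith
  have hstep2 : lowerRatio φ t ^ (n + 2) * φ 1 ≤ φ (Real.exp (((n:ℝ) + 2) * L)) := by
    have htexp : Real.exp (((n:ℝ) + 2) * L) = t ^ (n + 2 : ℕ) := by
      have : ((n:ℝ) + 2) * L = ((n + 2 : ℕ) : ℝ) * L := by push_cast; ring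
      rw [this, Real.exp_nat_mul, hLdef, Real.exp_log (lt_trans one_pos ht1)]
    rw [htexp]
    exact hφ.lowerRatio_pow_le ht1.le (n + 2)
  -- exponent comparisons
  have E1 : Real.exp (-(2 * L * |δ|)) * Real.exp (Real.log 2 * ((k:ℝ) * δ))
      ≤ Real.exp (L * δ * ((n:ℝ) + 2)) := by
    rw [← Real.exp_add]
    apply Real.exp_le_exp.2
    have hxd : Real.log 2 * ((k:ℝ) * δ) = x * δ := by rw [hxdef]; ring
    rw [hxd]
    rcases le_or_gt 0 δ with hd | hd
    · rw [abs_of_nonneg hd]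
      have h1 := mul_le_mul_of_nonneg_right hn2.le hd
      have h2 : 0 ≤ L * δ := mul_nonneg hL.le hd
      nlinarith
    · rw [abs_of_neg hd]
      have h1 := mul_le_mul_of_nonpos_right hn1 hd.le
      nlinarith
  have E2 : q ^ k ≤ lam ^ (n + 2) := by
    have hqk : q ^ k = Real.exp ((k:ℝ) * (Real.log 2 * Real.log lam / L)) := by
      rw [Real.exp_nat_mul]
    have hlamn : lam ^ (n + 2) = Real.exp (((n + 2 : ℕ):ℝ) * Real.log lam) := by
      rw [Real.exp_nat_mul, Real.exp_log (lt_trans one_pos hlam1)]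
    rw [hqk, hlamn]
    apply Real.exp_le_exp.2
    push_cast
    calc (k:ℝ) * (Real.log 2 * Real.log lam / L) = x * Real.log lam / L := by
          rw [hxdef]; ring
      _ ≤ ((n:ℝ) + 2) * Real.log lam := by
          rw [div_le_iff₀ hL]
          have h1 := mul_le_mul_of_nonneg_right hn2.le hloglam.le
          have h2 : 0 ≤ L * Real.log lam := mul_nonneg hL.le hloglam.le
          nlinarith
  -- put everything together
  have hrpow : (2 : ℝ) ^ ((k : ℝ) * δ) = Real.exp (Real.log 2 * ((k:ℝ) * δ)) :=
    Real.rpow_def_of_pos two_pos _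
  have hmain : φ 1 * Real.exp (-(2 * L * |δ|)) * Real.exp (Real.log 2 * ((k:ℝ) * δ)) * q ^ k
      ≤ lowerRatio φ t ^ (n + 2) * φ 1 := by
    have hfact : lowerRatio φ t ^ (n + 2)
        = Real.exp (L * δ * ((n:ℝ) + 2)) * lam ^ (n + 2) := by
      rw [hdecomp, mul_pow]
      congr 1
      rw [show L * δ * ((n:ℝ) + 2) = ((n + 2 : ℕ):ℝ) * (L * δ) by push_cast; ring,
        Real.exp_nat_mul]
    rw [hfact]
    calc φ 1 * Real.exp (-(2 * L * |δ|)) * Real.exp (Real.log 2 * ((k:ℝ) * δ)) * q ^ k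
        = φ 1 * ((Real.exp (-(2 * L * |δ|)) * Real.exp (Real.log 2 * ((k:ℝ) * δ))) * q ^ k) := by
          ring
      _ ≤ φ 1 * (Real.exp (L * δ * ((n:ℝ) + 2)) * lam ^ (n + 2)) := by
          apply mul_le_mul_of_nonneg_left _ hφ1.le
          apply mul_le_mul E1 E2 (by positivity) (by positivity)
      _ = Real.exp (L * δ * ((n:ℝ) + 2)) * lam ^ (n + 2) * φ 1 := by ring
  rw [hrpow]
  rw [div_mul_eq_mul_div, div_mul_eq_mul_div, div_le_iff₀ hK'0]
  calc φ 1 * Real.exp (-(2 * L * |δ|)) * q ^ k * Real.exp (Real.log 2 * ((k:ℝ) * δ))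
      = φ 1 * Real.exp (-(2 * L * |δ|)) * Real.exp (Real.log 2 * ((k:ℝ) * δ)) * q ^ k := by ring
    _ ≤ lowerRatio φ t ^ (n + 2) * φ 1 := hmain
    _ ≤ φ (Real.exp (((n:ℝ) + 2) * L)) := hstep2
    _ ≤ K' * φ ((2:ℝ) ^ (k:ℕ)) := hstep1
    _ = φ ((2:ℝ) ^ (k:ℕ)) * K' := by ring

end ClassV

namespace ClassV
variable {φ : ℝ → ℝ} (hφ : ClassV φ)
include hφ

lemma pointwise_bound {δ ρ : ℝ} (hρ : 0 < ρ) {a q : ℝ} (ha : 0 < a) (hq : 1 < q)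
    (hbound : ∀ k : ℕ, a * q ^ k * (2 : ℝ) ^ ((k : ℝ) * δ) ≤ φ ((2 : ℝ) ^ k)) (k : ℕ) :
    (2 : ℝ) ^ ((k : ℝ) * δ * ρ) * φ ((2 : ℝ) ^ k) ^ (-ρ)
      ≤ a ^ (-ρ) * (q ^ (-ρ)) ^ k := by
  have hq0 : (0:ℝ) < q := lt_trans one_pos hq
  have hphik : 0 < φ ((2:ℝ) ^ k) := hφ.pos _ (one_le_pow₀ one_le_two)
  have hlhs0 : (0:ℝ) < a * q ^ k * (2:ℝ) ^ ((k:ℝ) * δ) := by positivity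
  have h1 : φ ((2:ℝ) ^ k) ^ (-ρ) ≤ (a * q ^ k * (2:ℝ) ^ ((k:ℝ) * δ)) ^ (-ρ) :=
    Real.rpow_le_rpow_of_nonpos hlhs0 (hbound k) (neg_nonpos.2 hρ.le)
  have h2 : (a * q ^ k * (2:ℝ) ^ ((k:ℝ) * δ)) ^ (-ρ)
      = a ^ (-ρ) * (q ^ (-ρ)) ^ k * (2:ℝ) ^ (-((k:ℝ) * δ * ρ)) := by
    rw [Real.mul_rpow (by positivity) (by positivity),
      Real.mul_rpow ha.le (by positivity)]
    congr 1
    · congr 1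
      rw [← Real.rpow_natCast q k, ← Real.rpow_mul hq0.le, mul_comm ((k:ℕ):ℝ) (-ρ),
        Real.rpow_mul hq0.le, Real.rpow_natCast]
    · rw [← Real.rpow_mul (by norm_num : (0:ℝ) ≤ 2)]
      congr 1; ring
  have h3 : (0:ℝ) < (2:ℝ) ^ ((k:ℝ) * δ * ρ) := by positivity
  calc (2:ℝ) ^ ((k:ℝ) * δ * ρ) * φ ((2:ℝ) ^ k) ^ (-ρ)
      ≤ (2:ℝ) ^ ((k:ℝ) * δ * ρ) * (a ^ (-ρ) * (q ^ (-ρ)) ^ k * (2:ℝ) ^ (-((k:ℝ) * δ * ρ))) := by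
        rw [← h2]; exact mul_le_mul_of_nonneg_left h1 h3.le
    _ = a ^ (-ρ) * (q ^ (-ρ)) ^ k * ((2:ℝ) ^ ((k:ℝ) * δ * ρ) * (2:ℝ) ^ (-((k:ℝ) * δ * ρ))) := by
        ring
    _ = a ^ (-ρ) * (q ^ (-ρ)) ^ k := by
        rw [← Real.rpow_add two_pos, add_neg_cancel, Real.rpow_zero, mul_one]

end ClassV


/-- Let `ρ > 0`, `φ ∈ 𝒱` and `γ < β_φ + η`.  Then
`sup_{M ≥ 1} 2^{Mγρ} ∑_{m=0}^{M} 2^{-mγρ} 2^{-(M-m)ηρ} φ(2^{M-m})^{-ρ} < ∞`. -/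
theorem classV_sum_bound_beta (ρ : ℝ) (hρ : 0 < ρ) (φ : ℝ → ℝ) (hφ : ClassV φ)
    (γ η : ℝ) (hγ : γ < betaV φ + η) :
    ∃ C : ℝ, ∀ M : ℕ, 1 ≤ M →
      (2 : ℝ) ^ ((M : ℝ) * γ * ρ) *
        ∑ m ∈ Finset.range (M + 1),
          (2 : ℝ) ^ (-(m : ℝ) * γ * ρ) * (2 : ℝ) ^ (-((M - m : ℕ) : ℝ) * η * ρ) *
            φ ((2 : ℝ) ^ (M - m)) ^ (-ρ) ≤ C := by
  have hδ : γ - η < betaV φ := by linarith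
  obtain ⟨a, q, ha, hq, hbound⟩ := hφ.exists_growth hδ
  have hq0 : (0:ℝ) < q := lt_trans one_pos hq
  set r := q ^ (-ρ) with hrdef
  have hr0 : 0 < r := Real.rpow_pos_of_pos hq0 _
  have hr1 : r < 1 := Real.rpow_lt_one_of_one_lt_of_neg hq (neg_neg_iff_pos.2 hρ)
  refine ⟨a ^ (-ρ) * (1 - r)⁻¹, ?_⟩
  intro M _
  rw [Finset.mul_sum]
  have hterm : ∀ m ∈ Finset.range (M + 1),
      (2 : ℝ) ^ ((M : ℝ) * γ * ρ) *
        ((2 : ℝ) ^ (-(m : ℝ) * γ * ρ) * (2 : ℝ) ^ (-((M - m : ℕ) : ℝ) * η * ρ) *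
          φ ((2 : ℝ) ^ (M - m)) ^ (-ρ))
      ≤ a ^ (-ρ) * r ^ (M - m) := by
    intro m hm
    have hmM : m ≤ M := Nat.lt_succ_iff.mp (Finset.mem_range.mp hm)
    have hk : ((M - m : ℕ) : ℝ) = (M : ℝ) - (m : ℝ) := by
      push_cast [hmM]; ring
    have e0 : (2:ℝ) ^ ((M:ℝ) * γ * ρ) * (2:ℝ) ^ (-(m:ℝ) * γ * ρ) *
        (2:ℝ) ^ (-((M - m : ℕ):ℝ) * η * ρ)
        = (2:ℝ) ^ (((M - m : ℕ):ℝ) * (γ - η) * ρ) := by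
      rw [← Real.rpow_add two_pos, ← Real.rpow_add two_pos, hk]
      congr 1; ring
    have e1 : (2 : ℝ) ^ ((M : ℝ) * γ * ρ) *
        ((2 : ℝ) ^ (-(m : ℝ) * γ * ρ) * (2 : ℝ) ^ (-((M - m : ℕ) : ℝ) * η * ρ) *
          φ ((2 : ℝ) ^ (M - m)) ^ (-ρ))
        = (2:ℝ) ^ (((M - m : ℕ):ℝ) * (γ - η) * ρ) * φ ((2:ℝ) ^ (M - m)) ^ (-ρ) := by
      rw [← e0]; ring
    rw [e1]
    exact hφ.pointwise_bound hρ ha hq hbound (M - m)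
  calc ∑ m ∈ Finset.range (M + 1),
        (2 : ℝ) ^ ((M : ℝ) * γ * ρ) *
          ((2 : ℝ) ^ (-(m : ℝ) * γ * ρ) * (2 : ℝ) ^ (-((M - m : ℕ) : ℝ) * η * ρ) *
            φ ((2 : ℝ) ^ (M - m)) ^ (-ρ))
      ≤ ∑ m ∈ Finset.range (M + 1), a ^ (-ρ) * r ^ (M - m) :=
        Finset.sum_le_sum hterm
    _ = a ^ (-ρ) * ∑ m ∈ Finset.range (M + 1), r ^ (M - m) := by
        rw [Finset.mul_sum]
    _ = a ^ (-ρ) * ∑ j ∈ Finset.range (M + 1), r ^ j := by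
        congr 1
        exact Finset.sum_range_reflect (fun j => r ^ j) (M + 1)
    _ ≤ a ^ (-ρ) * (1 - r)⁻¹ := by
        apply mul_le_mul_of_nonneg_left _ (by positivity)
        calc ∑ j ∈ Finset.range (M + 1), r ^ j
            ≤ ∑' j : ℕ, r ^ j :=
              (summable_geometric_of_lt_one hr0.le hr1).sum_le_tsum _ (fun i _ => by positivity)
          _ = (1 - r)⁻¹ := tsum_geometric_of_lt_one hr0.le hr1
end
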